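/- arXiv:math/0112167 — 6 statements merged into one kernel-verified Lean document; each statement's English description precedes it below -/
import Mathlib

section
/- dim_k (I_W)_{a+b+2} = C(a+b+5, 3) − 6a − 4b − 9, where C(·,·) denotes the binomial coefficient and (I_W)_{a+b+2} is the degree-(a+b+2) graded piece of the ideal I_W = (x³, x²y, xy², y³, x·q, y·q, h). (Equivalently, h⁰(P³, I_W(a+b+2)) = C(a+b+5,3) − 6a − 4b − 9, as asserted in the proof of Proposition 5.2.) -/
open MvPolynomial Finsupp Finset

namespace Stmt3Aux

noncomputable def ee (i j k l : ℕ) : Fin 4 →₀ ℕ :=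
  Finsupp.single 0 i + Finsupp.single 1 j + Finsupp.single 2 k + Finsupp.single 3 l
@[simp] lemma ee0 (i j k l : ℕ) : ee i j k l 0 = i := by simp [ee, Finsupp.single_apply]
@[simp] lemma ee1 (i j k l : ℕ) : ee i j k l 1 = j := by simp [ee, Finsupp.single_apply]
@[simp] lemma ee2 (i j k l : ℕ) : ee i j k l 2 = k := by simp [ee, Finsupp.single_apply]
@[simp] lemma ee3 (i j k l : ℕ) : ee i j k l 3 = l := by simp [ee, Finsupp.single_apply]
lemma degree_four (m : Fin 4 →₀ ℕ) : m.degree = m 0 + m 1 + m 2 + m 3 := by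
  rw [Finsupp.degree_apply, Finset.sum_subset (Finset.subset_univ m.support)
    (by intro i _ h; simpa using h)]
  simp [Fin.sum_univ_four]
@[simp] lemma ee_degree (i j k l : ℕ) : (ee i j k l).degree = i + j + k + l := by
  rw [degree_four]; simp
lemma ne_ee_of (μ : Fin 4 →₀ ℕ) (i j c l : ℕ) (h : μ 0 + μ 1 ≠ i + j) :
    μ ≠ ee i j c l := fun he => h (by rw [he]; simp)

lemma ee_ne_of (i j c l : ℕ) (μ : Fin 4 →₀ ℕ) (h : i + j ≠ μ 0 + μ 1) :
    ee i j c l ≠ μ := fun he => h (by rw [← he]; simp)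

lemma ee_ne_ee₀ (i j c l i' j' c' l' : ℕ) (h : i ≠ i') :
    ee i j c l ≠ ee i' j' c' l' := fun he => h (by
      have := congrArg (fun f => (f : Fin 4 →₀ ℕ) 0) he; simpa using this)

lemma ee_ne_ee₁ (i j c l i' j' c' l' : ℕ) (h : j ≠ j') :
    ee i j c l ≠ ee i' j' c' l' := fun he => h (by
      have := congrArg (fun f => (f : Fin 4 →₀ ℕ) 1) he; simpa using this)

lemma ee_ne_ee₂ (i j c l i' j' c' l' : ℕ) (h : c ≠ c') :
    ee i j c l ≠ ee i' j' c' l' := fun he => h (by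
      have := congrArg (fun f => (f : Fin 4 →₀ ℕ) 2) he; simpa using this)

lemma degree_eq_sum_univ (m : Fin 4 →₀ ℕ) : m.degree = Finset.univ.sum ⇑m := by
  rw [Finsupp.degree_apply, Finset.sum_subset (Finset.subset_univ m.support)
    (by intro i _ h; simpa using h)]

variable {k : Type*} [Field k]
lemma monomial_ee (i j c l : ℕ) :
    (monomial (ee i j c l) (1:k)) = X 0 ^ i * X 1 ^ j * X 2 ^ c * X 3 ^ l := by
  simp [ee, X_pow_eq_monomial, monomial_mul]
lemma mono_factor {τ μ : Fin 4 →₀ ℕ} (hle : τ ≤ μ) :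
    (monomial μ (1:k)) = monomial (μ - τ) 1 * monomial τ 1 := by
  rw [monomial_mul, one_mul, tsub_add_cancel_of_le hle]

/-! ### The setup -/

variable (k) (a b : ℕ)

noncomputable def qp : MvPolynomial (Fin 4) k := X 0 * X 2 ^ (a+1) - X 1 * X 3 ^ (a+1)
noncomputable def hp : MvPolynomial (Fin 4) k := X 2 ^ b * qp k a - X 0 ^ 2 * X 3 ^ (a+b)

noncomputable def g : Fin 7 → MvPolynomial (Fin 4) k := fun i =>
  match i with
  | 0 => X 0 ^ 3
  | 1 => X 0 ^ 2 * X 1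
  | 2 => X 0 * X 1 ^ 2
  | 3 => X 1 ^ 3
  | 4 => X 0 * qp k a
  | 5 => X 1 * qp k a
  | 6 => hp k a b

def T : Finset (Fin 4 →₀ ℕ) :=
  (Finset.finsuppAntidiag (Finset.univ : Finset (Fin 4)) (a+b+2)).filter
    fun m => 3 ≤ m 0 + m 1

abbrev Idx (a b : ℕ) : Type := {m // m ∈ T a b} ⊕ (Fin b ⊕ Fin b ⊕ Unit)

noncomputable def v : Idx a b → MvPolynomial (Fin 4) k
  | .inl m => monomial m.1 1
  | .inr (.inl s) => X 0 * qp k a * X 2 ^ (s:ℕ) * X 3 ^ (b - 1 - (s:ℕ))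
  | .inr (.inr (.inl s)) => X 1 * qp k a * X 2 ^ (s:ℕ) * X 3 ^ (b - 1 - (s:ℕ))
  | .inr (.inr (.inr _)) => hp k a b

lemma mem_T_iff (μ : Fin 4 →₀ ℕ) :
    μ ∈ T a b ↔ μ.degree = a + b + 2 ∧ 3 ≤ μ 0 + μ 1 := by
  simp only [T, Finset.mem_filter, Finset.mem_finsuppAntidiag, and_congr_left_iff,
    and_iff_left (Finset.subset_univ _)]
  intro _
  rw [degree_eq_sum_univ]

/-! ### Expansions into monomials -/

lemma xqp_expand : X 0 * qp k a = monomial (ee 2 0 (a+1) 0) 1 - monomial (ee 1 1 0 (a+1)) 1 := by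
  rw [monomial_ee, monomial_ee, qp]; ring

lemma yqp_expand : X 1 * qp k a = monomial (ee 1 1 (a+1) 0) 1 - monomial (ee 0 2 0 (a+1)) 1 := by
  rw [monomial_ee, monomial_ee, qp]; ring

lemma xqs_expand (s t : ℕ) : X 0 * qp k a * X 2 ^ s * X 3 ^ t =
    monomial (ee 2 0 (a+1+s) t) 1 - monomial (ee 1 1 s (a+1+t)) 1 := by
  rw [monomial_ee, monomial_ee, qp]; ring

lemma yqs_expand (s t : ℕ) : X 1 * qp k a * X 2 ^ s * X 3 ^ t =
    monomial (ee 1 1 (a+1+s) t) 1 - monomial (ee 0 2 s (a+1+t)) 1 := by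
  rw [monomial_ee, monomial_ee, qp]; ring

lemma hp_expand : hp k a b =
    monomial (ee 1 0 (b+(a+1)) 0) 1 - monomial (ee 0 1 b (a+1)) 1
      - monomial (ee 2 0 0 (a+b)) 1 := by
  rw [monomial_ee, monomial_ee, monomial_ee, hp, qp]; ring

/-! ### Homogeneity -/

lemma qp_hom : (qp k a).IsHomogeneous (a+2) := by
  apply IsHomogeneous.sub
  · have := (isHomogeneous_X k (0 : Fin 4)).mul (isHomogeneous_X_pow (R := k) 2 (a+1))
    rwa [show 1 + (a+1) = a+2 by omega] at this
  · have := (isHomogeneous_X k (1 : Fin 4)).mul (isHomogeneous_X_pow (R := k) 3 (a+1))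
    rwa [show 1 + (a+1) = a+2 by omega] at this

lemma hp_hom : (hp k a b).IsHomogeneous (a+b+2) := by
  apply IsHomogeneous.sub
  · have := (isHomogeneous_X_pow (R := k) (2 : Fin 4) b).mul (qp_hom k a)
    rwa [show b + (a+2) = a+b+2 by omega] at this
  · have := (isHomogeneous_X_pow (R := k) (0 : Fin 4) 2).mul
      (isHomogeneous_X_pow (R := k) (3 : Fin 4) (a+b))
    rwa [show 2 + (a+b) = a+b+2 by omega] at this

lemma v_hom (i : Idx a b) : (v k a b i).IsHomogeneous (a+b+2) := by
  obtain (⟨μ, hμ⟩ | s | s | u) := i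
  · exact isHomogeneous_monomial _ ((mem_T_iff a b μ).mp hμ).1
  · have hs : (s:ℕ) < b := s.2
    have := (((isHomogeneous_X k (0 : Fin 4)).mul (qp_hom k a)).mul
      (isHomogeneous_X_pow (R := k) (2 : Fin 4) (s:ℕ))).mul
      (isHomogeneous_X_pow (R := k) (3 : Fin 4) (b-1-(s:ℕ)))
    rwa [show 1 + (a+2) + (s:ℕ) + (b-1-(s:ℕ)) = a+b+2 by omega] at this
  · have hs : (s:ℕ) < b := s.2
    have := (((isHomogeneous_X k (1 : Fin 4)).mul (qp_hom k a)).mul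
      (isHomogeneous_X_pow (R := k) (2 : Fin 4) (s:ℕ))).mul
      (isHomogeneous_X_pow (R := k) (3 : Fin 4) (b-1-(s:ℕ)))
    rwa [show 1 + (a+2) + (s:ℕ) + (b-1-(s:ℕ)) = a+b+2 by omega] at this
  · exact hp_hom k a b

/-! ### v lands in the ideal -/

lemma T_mem_ideal {μ : Fin 4 →₀ ℕ} (h2 : 3 ≤ μ 0 + μ 1) :
    (monomial μ (1:k)) ∈ Ideal.span (Set.range (g k a b)) := by
  have key : ∀ i j : ℕ, i + j = 3 → i ≤ μ 0 → j ≤ μ 1 →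
      (X 0 ^ i * X 1 ^ j : MvPolynomial (Fin 4) k) ∈ Ideal.span (Set.range (g k a b)) →
      (monomial μ (1:k)) ∈ Ideal.span (Set.range (g k a b)) := by
    intro i j hij hi hj hmem
    have hle : ee i j 0 0 ≤ μ := by
      rw [Finsupp.le_def]
      intro c
      fin_cases c <;> simp [hi, hj]
    rw [mono_factor hle]
    have : (monomial (ee i j 0 0) (1:k)) = X 0 ^ i * X 1 ^ j := by
      rw [monomial_ee]; ring
    rw [this]
    exact Ideal.mul_mem_left _ _ hmem
  rcases Nat.lt_or_ge (μ 0) 3 with h0 | h0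
  · rcases Nat.lt_or_ge (μ 0) 2 with h1 | h1
    · rcases Nat.lt_or_ge (μ 0) 1 with h2' | h2'
      · refine key 0 3 rfl (by omega) (by omega) ?_
        have : (X 0 ^ 0 * X 1 ^ 3 : MvPolynomial (Fin 4) k) = g k a b 3 := by
          show _ = (X 1 ^ 3 : MvPolynomial (Fin 4) k); ring
        rw [this]; exact Ideal.subset_span ⟨3, rfl⟩
      · refine key 1 2 rfl (by omega) (by omega) ?_
        have : (X 0 ^ 1 * X 1 ^ 2 : MvPolynomial (Fin 4) k) = g k a b 2 := by
          show _ = (X 0 * X 1 ^ 2 : MvPolynomial (Fin 4) k); ring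
        rw [this]; exact Ideal.subset_span ⟨2, rfl⟩
    · refine key 2 1 rfl (by omega) (by omega) ?_
      have : (X 0 ^ 2 * X 1 ^ 1 : MvPolynomial (Fin 4) k) = g k a b 1 := by
        simp [g]
      rw [this]; exact Ideal.subset_span ⟨1, rfl⟩
  · refine key 3 0 rfl (by omega) (by omega) ?_
    have : (X 0 ^ 3 * X 1 ^ 0 : MvPolynomial (Fin 4) k) = g k a b 0 := by
      show _ = (X 0 ^ 3 : MvPolynomial (Fin 4) k); ring
    rw [this]; exact Ideal.subset_span ⟨0, rfl⟩

lemma v_mem_ideal (i : Idx a b) : v k a b i ∈ Ideal.span (Set.range (g k a b)) := by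
  obtain (⟨μ, hμ⟩ | s | s | u) := i
  · exact T_mem_ideal k a b ((mem_T_iff a b μ).mp hμ).2
  · show X 0 * qp k a * X 2 ^ (s:ℕ) * X 3 ^ (b-1-(s:ℕ)) ∈ _
    have : X 0 * qp k a * X 2 ^ (s:ℕ) * X 3 ^ (b-1-(s:ℕ))
        = (X 2 ^ (s:ℕ) * X 3 ^ (b-1-(s:ℕ))) * g k a b 4 := by
      show _ = _ * (X 0 * qp k a); ring
    rw [this]
    exact Ideal.mul_mem_left _ _ (Ideal.subset_span ⟨4, rfl⟩)
  · show X 1 * qp k a * X 2 ^ (s:ℕ) * X 3 ^ (b-1-(s:ℕ)) ∈ _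
    have : X 1 * qp k a * X 2 ^ (s:ℕ) * X 3 ^ (b-1-(s:ℕ))
        = (X 2 ^ (s:ℕ) * X 3 ^ (b-1-(s:ℕ))) * g k a b 5 := by
      show _ = _ * (X 1 * qp k a); ring
    rw [this]
    exact Ideal.mul_mem_left _ _ (Ideal.subset_span ⟨5, rfl⟩)
  · exact Ideal.subset_span ⟨6, rfl⟩


/-! ### The span of v -/

noncomputable def U : Submodule k (MvPolynomial (Fin 4) k) :=
  Submodule.span k (Set.range (v k a b))

lemma mem_span_monomial {μ : Fin 4 →₀ ℕ} (h1 : μ.degree = a+b+2) (h2 : 3 ≤ μ 0 + μ 1)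
    (r : k) : (monomial μ r) ∈ U k a b := by
  have : (monomial μ r : MvPolynomial (Fin 4) k) = r • monomial μ 1 := by
    rw [smul_monomial, smul_eq_mul, mul_one]
  rw [this]
  exact Submodule.smul_mem _ _ (Submodule.subset_span
    ⟨Sum.inl ⟨μ, (mem_T_iff a b μ).mpr ⟨h1, h2⟩⟩, rfl⟩)

lemma support_degree {f : MvPolynomial (Fin 4) k} {n : ℕ} (hf : f.IsHomogeneous n)
    {m : Fin 4 →₀ ℕ} (hm : m ∈ f.support) : m.degree = n := by
  have := hf (MvPolynomial.mem_support_iff.mp hm)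
  rwa [Finsupp.degree_eq_weight_one]

lemma cubic_case {i j : ℕ} (hij : i + j = 3) {n : ℕ} (hn : n + 3 = a+b+2)
    {f : MvPolynomial (Fin 4) k} (hf : f.IsHomogeneous n) :
    f * (X 0 ^ i * X 1 ^ j) ∈ U k a b := by
  rw [f.as_sum, Finset.sum_mul]
  apply Submodule.sum_mem
  intro m hm
  have : (monomial m (coeff m f)) * (X 0 ^ i * X 1 ^ j)
      = monomial (m + ee i j 0 0) (coeff m f) := by
    have h1 : (X 0 ^ i * X 1 ^ j : MvPolynomial (Fin 4) k) = monomial (ee i j 0 0) 1 := by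
      rw [monomial_ee]; ring
    rw [h1, monomial_mul, mul_one]
  rw [this]
  apply mem_span_monomial
  · rw [degree_four] at *
    have := support_degree k hf hm
    rw [degree_four] at this
    simp only [Finsupp.add_apply, ee0, ee1, ee2, ee3]
    omega
  · simp only [Finsupp.add_apply, ee0, ee1]
    omega

lemma xq_case {f : MvPolynomial (Fin 4) k} (hb : 1 ≤ b) (hf : f.IsHomogeneous (b-1)) :
    f * (X 0 * qp k a) ∈ U k a b := by
  rw [f.as_sum, Finset.sum_mul]
  apply Submodule.sum_mem
  intro m hm
  have hdeg : m.degree = b - 1 := support_degree k hf hm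
  rw [degree_four] at hdeg
  by_cases h0 : m 0 = 0 ∧ m 1 = 0
  · -- pure z,w monomial: this is (up to scalar) a designated basis vector
    have hm2 : m 2 < b := by omega
    have hmeq : m = ee 0 0 (m 2) (m 3) := by
      ext i
      fin_cases i <;> simp [h0.1, h0.2]
    have hkey : (monomial m (coeff m f)) * (X 0 * qp k a)
        = (coeff m f) • (X 0 * qp k a * X 2 ^ (m 2) * X 3 ^ (b - 1 - (m 2))) := by
      have : (monomial m (coeff m f)) = (coeff m f) • (X 2 ^ (m 2) * X 3 ^ (m 3) :
          MvPolynomial (Fin 4) k) := by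
        rw [smul_eq_C_mul,
          show (X 2 ^ (m 2) * X 3 ^ (m 3) : MvPolynomial (Fin 4) k)
            = monomial (ee 0 0 (m 2) (m 3)) 1 by rw [monomial_ee]; ring,
          C_mul_monomial, mul_one, ← hmeq]
      rw [this, show b - 1 - m 2 = m 3 by omega, smul_mul_assoc]
      congr 1
      ring
    rw [hkey]
    exact Submodule.smul_mem _ _ (Submodule.subset_span
      ⟨Sum.inr (Sum.inl ⟨m 2, hm2⟩), rfl⟩)
  · -- divisible by x or y
    rw [xqp_expand, mul_sub]
    have e1 : (monomial m (coeff m f)) * (monomial (ee 2 0 (a+1) 0) (1:k))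
        = monomial (m + ee 2 0 (a+1) 0) (coeff m f) := by rw [monomial_mul, mul_one]
    have e2 : (monomial m (coeff m f)) * (monomial (ee 1 1 0 (a+1)) (1:k))
        = monomial (m + ee 1 1 0 (a+1)) (coeff m f) := by rw [monomial_mul, mul_one]
    rw [e1, e2]
    apply Submodule.sub_mem
    · apply mem_span_monomial
      · rw [degree_four]
        simp only [Finsupp.add_apply, ee0, ee1, ee2, ee3]
        omega
      · simp only [Finsupp.add_apply, ee0, ee1]; omega
    · apply mem_span_monomial
      · rw [degree_four]
        simp only [Finsupp.add_apply, ee0, ee1, ee2, ee3]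
        omega
      · simp only [Finsupp.add_apply, ee0, ee1]; omega

lemma yq_case {f : MvPolynomial (Fin 4) k} (hb : 1 ≤ b) (hf : f.IsHomogeneous (b-1)) :
    f * (X 1 * qp k a) ∈ U k a b := by
  rw [f.as_sum, Finset.sum_mul]
  apply Submodule.sum_mem
  intro m hm
  have hdeg : m.degree = b - 1 := support_degree k hf hm
  rw [degree_four] at hdeg
  by_cases h0 : m 0 = 0 ∧ m 1 = 0
  · have hm2 : m 2 < b := by omega
    have hmeq : m = ee 0 0 (m 2) (m 3) := by
      ext i
      fin_cases i <;> simp [h0.1, h0.2]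
    have hkey : (monomial m (coeff m f)) * (X 1 * qp k a)
        = (coeff m f) • (X 1 * qp k a * X 2 ^ (m 2) * X 3 ^ (b - 1 - (m 2))) := by
      have : (monomial m (coeff m f)) = (coeff m f) • (X 2 ^ (m 2) * X 3 ^ (m 3) :
          MvPolynomial (Fin 4) k) := by
        rw [smul_eq_C_mul,
          show (X 2 ^ (m 2) * X 3 ^ (m 3) : MvPolynomial (Fin 4) k)
            = monomial (ee 0 0 (m 2) (m 3)) 1 by rw [monomial_ee]; ring,
          C_mul_monomial, mul_one, ← hmeq]
      rw [this, show b - 1 - m 2 = m 3 by omega, smul_mul_assoc]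
      congr 1
      ring
    rw [hkey]
    exact Submodule.smul_mem _ _ (Submodule.subset_span
      ⟨Sum.inr (Sum.inr (Sum.inl ⟨m 2, hm2⟩)), rfl⟩)
  · rw [yqp_expand, mul_sub]
    have e1 : (monomial m (coeff m f)) * (monomial (ee 1 1 (a+1) 0) (1:k))
        = monomial (m + ee 1 1 (a+1) 0) (coeff m f) := by rw [monomial_mul, mul_one]
    have e2 : (monomial m (coeff m f)) * (monomial (ee 0 2 0 (a+1)) (1:k))
        = monomial (m + ee 0 2 0 (a+1)) (coeff m f) := by rw [monomial_mul, mul_one]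
    rw [e1, e2]
    apply Submodule.sub_mem
    · apply mem_span_monomial
      · rw [degree_four]
        simp only [Finsupp.add_apply, ee0, ee1, ee2, ee3]
        omega
      · simp only [Finsupp.add_apply, ee0, ee1]; omega
    · apply mem_span_monomial
      · rw [degree_four]
        simp only [Finsupp.add_apply, ee0, ee1, ee2, ee3]
        omega
      · simp only [Finsupp.add_apply, ee0, ee1]; omega


/-- homogeneous component of a product with a homogeneous factor -/
lemma hc_mul {gg : MvPolynomial (Fin 4) k} {e : ℕ} (hgg : gg.IsHomogeneous e)
    (c : MvPolynomial (Fin 4) k) (n : ℕ) :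
    homogeneousComponent n (c * gg) =
      if e ≤ n then homogeneousComponent (n - e) c * gg else 0 := by
  conv_lhs => rw [← sum_homogeneousComponent c, Finset.sum_mul, map_sum]
  have hterm : ∀ i ∈ Finset.range (c.totalDegree + 1),
      homogeneousComponent n (homogeneousComponent i c * gg)
      = if n = i + e then homogeneousComponent i c * gg else 0 := fun i _ =>
    homogeneousComponent_of_mem ((homogeneousComponent_isHomogeneous i c).mul hgg)
  rw [Finset.sum_congr rfl hterm]
  split
  · next h =>
    rw [Finset.sum_eq_single (n - e)]
    · rw [if_pos (by omega)]
    · intro i _ hi; rw [if_neg (by omega)]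
    · intro hni
      rw [if_pos (by omega), homogeneousComponent_eq_zero, zero_mul]
      simp only [Finset.mem_range, not_lt] at hni
      omega
  · next h =>
    exact Finset.sum_eq_zero fun i _ => if_neg (by omega)

lemma span_eq :
    U k a b = (Ideal.span (Set.range (g k a b))).restrictScalars k ⊓
      homogeneousSubmodule (Fin 4) k (a+b+2) := by
  apply le_antisymm
  · rw [U, Submodule.span_le]
    rintro p ⟨i, rfl⟩
    exact Submodule.mem_inf.mpr ⟨v_mem_ideal k a b i, v_hom k a b i⟩
  · rintro p hmem
    obtain ⟨hp1, hp2⟩ := Submodule.mem_inf.mp hmem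
    have hp1' : p ∈ Ideal.span (Set.range (g k a b)) := hp1
    obtain ⟨c, hc⟩ := Ideal.mem_span_range_iff_exists_fun.mp hp1'
    have hps : p = homogeneousComponent (a+b+2) p := by
      have := homogeneousComponent_of_mem (p := p) (m := a+b+2) hp2
      rw [if_pos rfl] at this
      exact this.symm
    rw [hps, ← hc, map_sum]
    apply Submodule.sum_mem
    intro i _
    fin_cases i
    · -- X 0 ^ 3
      show (homogeneousComponent (a+b+2)) (c 0 * (X 0 ^ 3)) ∈ U k a b
      rw [hc_mul k (isHomogeneous_X_pow (R := k) (0 : Fin 4) 3)]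
      split
      · next h3 =>
        rw [show (X 0 ^ 3 : MvPolynomial (Fin 4) k) = X 0 ^ 3 * X 1 ^ 0 by ring]
        exact cubic_case k a b (by omega) (by omega)
          (homogeneousComponent_isHomogeneous _ _)
      · exact Submodule.zero_mem _
    · show (homogeneousComponent (a+b+2)) (c 1 * (X 0 ^ 2 * X 1)) ∈ U k a b
      have hg : (X 0 ^ 2 * X 1 : MvPolynomial (Fin 4) k).IsHomogeneous 3 := by
        simpa using (isHomogeneous_X_pow (R := k) (0 : Fin 4) 2).mul
          (isHomogeneous_X_pow (R := k) (1 : Fin 4) 1)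
      rw [hc_mul k hg]
      split
      · next h3 =>
        rw [show (X 0 ^ 2 * X 1 : MvPolynomial (Fin 4) k) = X 0 ^ 2 * X 1 ^ 1 by ring]
        exact cubic_case k a b (by omega) (by omega)
          (homogeneousComponent_isHomogeneous _ _)
      · exact Submodule.zero_mem _
    · show (homogeneousComponent (a+b+2)) (c 2 * (X 0 * X 1 ^ 2)) ∈ U k a b
      have hg : (X 0 * X 1 ^ 2 : MvPolynomial (Fin 4) k).IsHomogeneous 3 := by
        simpa using (isHomogeneous_X_pow (R := k) (0 : Fin 4) 1).mul
          (isHomogeneous_X_pow (R := k) (1 : Fin 4) 2)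
      rw [hc_mul k hg]
      split
      · next h3 =>
        rw [show (X 0 * X 1 ^ 2 : MvPolynomial (Fin 4) k) = X 0 ^ 1 * X 1 ^ 2 by ring]
        exact cubic_case k a b (by omega) (by omega)
          (homogeneousComponent_isHomogeneous _ _)
      · exact Submodule.zero_mem _
    · show (homogeneousComponent (a+b+2)) (c 3 * (X 1 ^ 3)) ∈ U k a b
      rw [hc_mul k (isHomogeneous_X_pow (R := k) (1 : Fin 4) 3)]
      split
      · next h3 =>
        rw [show (X 1 ^ 3 : MvPolynomial (Fin 4) k) = X 0 ^ 0 * X 1 ^ 3 by ring]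
        exact cubic_case k a b (by omega) (by omega)
          (homogeneousComponent_isHomogeneous _ _)
      · exact Submodule.zero_mem _
    · -- X 0 * qp
      have hxq : (X 0 * qp k a : MvPolynomial (Fin 4) k).IsHomogeneous (a+3) := by
        have := (isHomogeneous_X k (0 : Fin 4)).mul (qp_hom k a)
        rwa [show 1 + (a+2) = a+3 by omega] at this
      show (homogeneousComponent (a+b+2)) (c 4 * (X 0 * qp k a)) ∈ U k a b
      rw [hc_mul k hxq]
      split
      · next h3 =>
        have hb : 1 ≤ b := by omega
        rw [show a+b+2-(a+3) = b-1 by omega]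
        exact xq_case k a b hb (homogeneousComponent_isHomogeneous _ _)
      · exact Submodule.zero_mem _
    · have hyq : (X 1 * qp k a : MvPolynomial (Fin 4) k).IsHomogeneous (a+3) := by
        have := (isHomogeneous_X k (1 : Fin 4)).mul (qp_hom k a)
        rwa [show 1 + (a+2) = a+3 by omega] at this
      show (homogeneousComponent (a+b+2)) (c 5 * (X 1 * qp k a)) ∈ U k a b
      rw [hc_mul k hyq]
      split
      · next h3 =>
        have hb : 1 ≤ b := by omega
        rw [show a+b+2-(a+3) = b-1 by omega]
        exact yq_case k a b hb (homogeneousComponent_isHomogeneous _ _)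
      · exact Submodule.zero_mem _
    · show (homogeneousComponent (a+b+2)) (c 6 * hp k a b) ∈ U k a b
      rw [hc_mul k (hp_hom k a b), if_pos le_rfl,
        Nat.sub_self, homogeneousComponent_zero, C_mul']
      exact Submodule.smul_mem _ _ (Submodule.subset_span
        ⟨Sum.inr (Sum.inr (Sum.inr ())), rfl⟩)


/-! ### Linear independence -/

lemma v_indep : LinearIndependent k (v k a b) := by
  rw [Fintype.linearIndependent_iff]
  intro gc H i₀
  have key : ∀ τ : Fin 4 →₀ ℕ,
      (∑ m : {m // m ∈ T a b}, gc (Sum.inl m) * coeff τ ((monomial m.1) (1:k)))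
      + ((∑ s : Fin b, gc (Sum.inr (Sum.inl s)) *
            coeff τ (X 0 * qp k a * X 2 ^ (s:ℕ) * X 3 ^ (b-1-(s:ℕ))))
        + ((∑ s : Fin b, gc (Sum.inr (Sum.inr (Sum.inl s))) *
              coeff τ (X 1 * qp k a * X 2 ^ (s:ℕ) * X 3 ^ (b-1-(s:ℕ))))
          + gc (Sum.inr (Sum.inr (Sum.inr ()))) * coeff τ (hp k a b))) = 0 := by
    intro τ
    have h0 := congrArg (MvPolynomial.coeff τ) H
    rw [MvPolynomial.coeff_sum, MvPolynomial.coeff_zero,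
      Fintype.sum_sum_type, Fintype.sum_sum_type, Fintype.sum_sum_type] at h0
    simp only [MvPolynomial.coeff_smul, smul_eq_mul, Fintype.sum_unique] at h0
    exact h0
  obtain (⟨μ, hμ⟩ | s₀ | s₀ | u) := i₀
  · -- T part
    have h3 : 3 ≤ μ 0 + μ 1 := ((mem_T_iff a b μ).mp hμ).2
    have h := key μ
    have hA : ∀ m : {m // m ∈ T a b}, gc (Sum.inl m) * coeff μ ((monomial m.1) (1:k))
        = if m = (⟨μ, hμ⟩ : {m // m ∈ T a b}) then gc (Sum.inl m) else 0 := by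
      intro m
      rw [coeff_monomial]
      rcases eq_or_ne m ⟨μ, hμ⟩ with rfl | hne
      · rw [if_pos rfl, if_pos rfl, mul_one]
      · rw [if_neg (fun he => hne (Subtype.ext he)), if_neg hne, mul_zero]
    have hB : ∀ s : Fin b, coeff μ (X 0 * qp k a * X 2 ^ (s:ℕ) * X 3 ^ (b-1-(s:ℕ))) = 0 := by
      intro s
      rw [xqs_expand, coeff_sub, coeff_monomial, coeff_monomial,
        if_neg (ee_ne_of 2 0 (a+1+(s:ℕ)) (b-1-(s:ℕ)) μ (by omega)),
        if_neg (ee_ne_of 1 1 (s:ℕ) (a+1+(b-1-(s:ℕ))) μ (by omega)), sub_zero]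
    have hC : ∀ s : Fin b, coeff μ (X 1 * qp k a * X 2 ^ (s:ℕ) * X 3 ^ (b-1-(s:ℕ))) = 0 := by
      intro s
      rw [yqs_expand, coeff_sub, coeff_monomial, coeff_monomial,
        if_neg (ee_ne_of 1 1 (a+1+(s:ℕ)) (b-1-(s:ℕ)) μ (by omega)),
        if_neg (ee_ne_of 0 2 (s:ℕ) (a+1+(b-1-(s:ℕ))) μ (by omega)), sub_zero]
    have hD : coeff μ (hp k a b) = 0 := by
      rw [hp_expand, coeff_sub, coeff_sub, coeff_monomial, coeff_monomial, coeff_monomial,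
        if_neg (ee_ne_of 1 0 (b+(a+1)) 0 μ (by omega)),
        if_neg (ee_ne_of 0 1 b (a+1) μ (by omega)),
        if_neg (ee_ne_of 2 0 0 (a+b) μ (by omega))]
      ring
    rw [Finset.sum_congr rfl (fun m _ => hA m), Finset.sum_ite_eq' Finset.univ,
      if_pos (Finset.mem_univ _)] at h
    simp only [hB, hC, hD, mul_zero, add_zero, Finset.sum_const_zero] at h
    exact h
  · -- x·q part
    have h := key (ee 2 0 (a+1+(s₀:ℕ)) (b-1-(s₀:ℕ)))
    have hA : ∀ m : {m // m ∈ T a b},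
        gc (Sum.inl m) * coeff (ee 2 0 (a+1+(s₀:ℕ)) (b-1-(s₀:ℕ))) ((monomial m.1) (1:k)) = 0 := by
      intro m
      have h3 : 3 ≤ m.1 0 + m.1 1 := ((mem_T_iff a b m.1).mp m.2).2
      rw [coeff_monomial, if_neg (ne_ee_of m.1 2 0 (a+1+(s₀:ℕ)) (b-1-(s₀:ℕ)) (by omega)),
        mul_zero]
    have hB : ∀ s : Fin b, gc (Sum.inr (Sum.inl s)) *
        coeff (ee 2 0 (a+1+(s₀:ℕ)) (b-1-(s₀:ℕ)))
          (X 0 * qp k a * X 2 ^ (s:ℕ) * X 3 ^ (b-1-(s:ℕ)))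
        = if s = s₀ then gc (Sum.inr (Sum.inl s)) else 0 := by
      intro s
      rw [xqs_expand, coeff_sub, coeff_monomial, coeff_monomial,
        if_neg (ee_ne_ee₀ 1 1 (s:ℕ) (a+1+(b-1-(s:ℕ)))
          2 0 (a+1+(s₀:ℕ)) (b-1-(s₀:ℕ)) (by omega)), sub_zero]
      rcases eq_or_ne s s₀ with rfl | hne
      · rw [if_pos rfl, if_pos rfl, mul_one]
      · have hv : (s:ℕ) ≠ (s₀:ℕ) := fun hh => hne (Fin.ext hh)
        rw [if_neg (ee_ne_ee₂ 2 0 (a+1+(s:ℕ)) (b-1-(s:ℕ))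
          2 0 (a+1+(s₀:ℕ)) (b-1-(s₀:ℕ)) (by omega)), if_neg hne, mul_zero]
    have hC : ∀ s : Fin b, coeff (ee 2 0 (a+1+(s₀:ℕ)) (b-1-(s₀:ℕ)))
        (X 1 * qp k a * X 2 ^ (s:ℕ) * X 3 ^ (b-1-(s:ℕ))) = 0 := by
      intro s
      rw [yqs_expand, coeff_sub, coeff_monomial, coeff_monomial,
        if_neg (ee_ne_ee₀ 1 1 (a+1+(s:ℕ)) (b-1-(s:ℕ))
          2 0 (a+1+(s₀:ℕ)) (b-1-(s₀:ℕ)) (by omega)),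
        if_neg (ee_ne_ee₀ 0 2 (s:ℕ) (a+1+(b-1-(s:ℕ)))
          2 0 (a+1+(s₀:ℕ)) (b-1-(s₀:ℕ)) (by omega)), sub_zero]
    have hD : coeff (ee 2 0 (a+1+(s₀:ℕ)) (b-1-(s₀:ℕ))) (hp k a b) = 0 := by
      rw [hp_expand, coeff_sub, coeff_sub, coeff_monomial, coeff_monomial, coeff_monomial,
        if_neg (ee_ne_ee₀ 1 0 (b+(a+1)) 0 2 0 (a+1+(s₀:ℕ)) (b-1-(s₀:ℕ)) (by omega)),
        if_neg (ee_ne_ee₀ 0 1 b (a+1) 2 0 (a+1+(s₀:ℕ)) (b-1-(s₀:ℕ)) (by omega)),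
        if_neg (ee_ne_ee₂ 2 0 0 (a+b) 2 0 (a+1+(s₀:ℕ)) (b-1-(s₀:ℕ)) (by omega))]
      ring
    rw [Finset.sum_congr rfl (fun m _ => hA m), Finset.sum_congr rfl (fun s _ => hB s),
      Finset.sum_ite_eq' Finset.univ, if_pos (Finset.mem_univ _)] at h
    simp only [hC, hD, mul_zero, add_zero, Finset.sum_const_zero] at h
    simpa using h
  · -- y·q part
    have h := key (ee 0 2 (s₀:ℕ) (a+1+(b-1-(s₀:ℕ))))
    have hA : ∀ m : {m // m ∈ T a b},
        gc (Sum.inl m) * coeff (ee 0 2 (s₀:ℕ) (a+1+(b-1-(s₀:ℕ)))) ((monomial m.1) (1:k)) = 0 := by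
      intro m
      have h3 : 3 ≤ m.1 0 + m.1 1 := ((mem_T_iff a b m.1).mp m.2).2
      rw [coeff_monomial, if_neg (ne_ee_of m.1 0 2 (s₀:ℕ) (a+1+(b-1-(s₀:ℕ))) (by omega)),
        mul_zero]
    have hB : ∀ s : Fin b, coeff (ee 0 2 (s₀:ℕ) (a+1+(b-1-(s₀:ℕ))))
        (X 0 * qp k a * X 2 ^ (s:ℕ) * X 3 ^ (b-1-(s:ℕ))) = 0 := by
      intro s
      rw [xqs_expand, coeff_sub, coeff_monomial, coeff_monomial,
        if_neg (ee_ne_ee₀ 2 0 (a+1+(s:ℕ)) (b-1-(s:ℕ))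
          0 2 (s₀:ℕ) (a+1+(b-1-(s₀:ℕ))) (by omega)),
        if_neg (ee_ne_ee₀ 1 1 (s:ℕ) (a+1+(b-1-(s:ℕ)))
          0 2 (s₀:ℕ) (a+1+(b-1-(s₀:ℕ))) (by omega)), sub_zero]
    have hC : ∀ s : Fin b, gc (Sum.inr (Sum.inr (Sum.inl s))) *
        coeff (ee 0 2 (s₀:ℕ) (a+1+(b-1-(s₀:ℕ))))
          (X 1 * qp k a * X 2 ^ (s:ℕ) * X 3 ^ (b-1-(s:ℕ)))
        = if s = s₀ then -(gc (Sum.inr (Sum.inr (Sum.inl s)))) else 0 := by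
      intro s
      rw [yqs_expand, coeff_sub, coeff_monomial, coeff_monomial,
        if_neg (ee_ne_ee₀ 1 1 (a+1+(s:ℕ)) (b-1-(s:ℕ))
          0 2 (s₀:ℕ) (a+1+(b-1-(s₀:ℕ))) (by omega))]
      rcases eq_or_ne s s₀ with rfl | hne
      · rw [if_pos rfl]
        simp
      · have hv : (s:ℕ) ≠ (s₀:ℕ) := fun hh => hne (Fin.ext hh)
        rw [if_neg (ee_ne_ee₂ 0 2 (s:ℕ) (a+1+(b-1-(s:ℕ)))
          0 2 (s₀:ℕ) (a+1+(b-1-(s₀:ℕ))) (by omega)), if_neg hne]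
        ring
    have hD : coeff (ee 0 2 (s₀:ℕ) (a+1+(b-1-(s₀:ℕ)))) (hp k a b) = 0 := by
      rw [hp_expand, coeff_sub, coeff_sub, coeff_monomial, coeff_monomial, coeff_monomial,
        if_neg (ee_ne_ee₀ 1 0 (b+(a+1)) 0 0 2 (s₀:ℕ) (a+1+(b-1-(s₀:ℕ))) (by omega)),
        if_neg (ee_ne_ee₁ 0 1 b (a+1) 0 2 (s₀:ℕ) (a+1+(b-1-(s₀:ℕ))) (by omega)),
        if_neg (ee_ne_ee₀ 2 0 0 (a+b) 0 2 (s₀:ℕ) (a+1+(b-1-(s₀:ℕ))) (by omega))]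
      ring
    rw [Finset.sum_congr rfl (fun m _ => hA m), Finset.sum_congr rfl (fun s _ => hC s),
      Finset.sum_ite_eq' Finset.univ, if_pos (Finset.mem_univ _)] at h
    simp only [hB, hD, mul_zero, add_zero, Finset.sum_const_zero] at h
    have h' : -(gc (Sum.inr (Sum.inr (Sum.inl s₀)))) = 0 := by simpa using h
    exact neg_eq_zero.mp h'
  · -- h part
    have h := key (ee 1 0 (b+(a+1)) 0)
    have hA : ∀ m : {m // m ∈ T a b},
        gc (Sum.inl m) * coeff (ee 1 0 (b+(a+1)) 0) ((monomial m.1) (1:k)) = 0 := by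
      intro m
      have h3 : 3 ≤ m.1 0 + m.1 1 := ((mem_T_iff a b m.1).mp m.2).2
      rw [coeff_monomial, if_neg (ne_ee_of m.1 1 0 (b+(a+1)) 0 (by omega)), mul_zero]
    have hB : ∀ s : Fin b, coeff (ee 1 0 (b+(a+1)) 0)
        (X 0 * qp k a * X 2 ^ (s:ℕ) * X 3 ^ (b-1-(s:ℕ))) = 0 := by
      intro s
      rw [xqs_expand, coeff_sub, coeff_monomial, coeff_monomial,
        if_neg (ee_ne_ee₀ 2 0 (a+1+(s:ℕ)) (b-1-(s:ℕ)) 1 0 (b+(a+1)) 0 (by omega)),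
        if_neg (ee_ne_ee₁ 1 1 (s:ℕ) (a+1+(b-1-(s:ℕ))) 1 0 (b+(a+1)) 0 (by omega)), sub_zero]
    have hC : ∀ s : Fin b, coeff (ee 1 0 (b+(a+1)) 0)
        (X 1 * qp k a * X 2 ^ (s:ℕ) * X 3 ^ (b-1-(s:ℕ))) = 0 := by
      intro s
      rw [yqs_expand, coeff_sub, coeff_monomial, coeff_monomial,
        if_neg (ee_ne_ee₁ 1 1 (a+1+(s:ℕ)) (b-1-(s:ℕ)) 1 0 (b+(a+1)) 0 (by omega)),
        if_neg (ee_ne_ee₀ 0 2 (s:ℕ) (a+1+(b-1-(s:ℕ))) 1 0 (b+(a+1)) 0 (by omega)), sub_zero]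
    have hD : coeff (ee 1 0 (b+(a+1)) 0) (hp k a b) = 1 := by
      rw [hp_expand, coeff_sub, coeff_sub, coeff_monomial, coeff_monomial, coeff_monomial,
        if_neg (ee_ne_ee₀ 0 1 b (a+1) 1 0 (b+(a+1)) 0 (by omega)),
        if_neg (ee_ne_ee₀ 2 0 0 (a+b) 1 0 (b+(a+1)) 0 (by omega)), if_pos rfl]
      ring
    rw [Finset.sum_congr rfl (fun m _ => hA m), hD] at h
    simp only [hB, hC, mul_zero, add_zero, mul_one, zero_add,
      Finset.sum_const_zero] at h
    obtain ⟨⟩ := u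
    exact h


/-! ### Counting -/

lemma sum_univ_eq (m : Fin 4 →₀ ℕ) : (m.sum fun _ => id) = Finset.univ.sum ⇑m := by
  rw [Finsupp.sum_fintype]
  · rfl
  · intro; rfl

lemma card_F (n : ℕ) :
    (Finset.finsuppAntidiag (Finset.univ : Finset (Fin 4)) n).card = (n+3).choose 3 := by
  rw [← Fintype.card_coe]
  have e : {m // m ∈ Finset.finsuppAntidiag (Finset.univ : Finset (Fin 4)) n}
      ≃ Sym (Fin 4) n := by
    refine Equiv.subtypeEquiv Finsupp.orderIsoMultiset.toEquiv (fun m => ?_)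
    simp only [Finset.mem_finsuppAntidiag]
    have hcm : Multiset.card (Finsupp.toMultiset m) = Finset.univ.sum ⇑m := by
      rw [Finsupp.card_toMultiset, sum_univ_eq]
    constructor
    · rintro ⟨h1, -⟩
      show Multiset.card (Finsupp.toMultiset m) = n
      omega
    · intro h1
      have : Multiset.card (Finsupp.toMultiset m) = n := h1
      exact ⟨by omega, Finset.subset_univ _⟩
  rw [Fintype.card_congr e, Sym.card_sym_eq_choose]
  have h4 : Fintype.card (Fin 4) + n - 1 = n + 3 := by simp; omega
  rw [h4, ← Nat.choose_symm (by omega : n ≤ n + 3)]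
  congr 1
  omega

def L : Finset (ℕ × ℕ) := {(0,0),(1,0),(0,1),(2,0),(1,1),(0,2)}

lemma card_compl (d : ℕ) (hd : 2 ≤ d) :
    ((Finset.finsuppAntidiag (Finset.univ : Finset (Fin 4)) d).filter
      fun m => ¬ 3 ≤ m 0 + m 1).card + 2 = 6 * d := by
  have hset : ((Finset.finsuppAntidiag (Finset.univ : Finset (Fin 4)) d).filter
      fun m => ¬ 3 ≤ m 0 + m 1)
      = L.biUnion fun p => (Finset.range (d+1-p.1-p.2)).image
          fun c => ee p.1 p.2 c (d - p.1 - p.2 - c) := by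
    ext m
    simp only [Finset.mem_filter, Finset.mem_finsuppAntidiag, Finset.mem_biUnion,
      Finset.mem_image, Finset.mem_range]
    constructor
    · rintro ⟨⟨hsum, -⟩, hle⟩
      rw [Fin.sum_univ_four] at hsum
      refine ⟨(m 0, m 1), ?_, m 2, by omega, ?_⟩
      · simp only [L, Finset.mem_insert, Finset.mem_singleton, Prod.mk.injEq,
          Prod.ext_iff]
        omega
      · ext i
        fin_cases i <;> simp <;> omega
    · rintro ⟨p, hp, c, hc, rfl⟩
      have hple : p.1 + p.2 ≤ 2 := by
        fin_cases hp <;> simp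
      refine ⟨⟨?_, Finset.subset_univ _⟩, by simp; omega⟩
      rw [Fin.sum_univ_four]
      simp
      omega
  rw [hset, Finset.card_biUnion]
  · have hcard : ∀ p ∈ L, ((Finset.range (d+1-p.1-p.2)).image
        fun c => ee p.1 p.2 c (d - p.1 - p.2 - c)).card = d+1-p.1-p.2 := by
      intro p _
      rw [Finset.card_image_of_injective, Finset.card_range]
      intro c c' hcc
      have := congrArg (fun f => (f : Fin 4 →₀ ℕ) 2) hcc
      simpa using this
    rw [Finset.sum_congr rfl hcard]
    simp only [L]
    rw [Finset.sum_insert (by decide), Finset.sum_insert (by decide),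
      Finset.sum_insert (by decide), Finset.sum_insert (by decide),
      Finset.sum_insert (by decide), Finset.sum_singleton]
    omega
  · intro p hp p' hp' hpp
    simp only [Finset.disjoint_left, Finset.mem_image, Finset.mem_range]
    rintro m ⟨c, hc, rfl⟩ ⟨c', hc', hm⟩
    apply hpp
    have h0 := congrArg (fun f => (f : Fin 4 →₀ ℕ) 0) hm
    have h1 := congrArg (fun f => (f : Fin 4 →₀ ℕ) 1) hm
    simp at h0 h1
    exact Prod.ext h0.symm h1.symm

set_option maxHeartbeats 1000000 in
lemma finrank_U : Module.finrank k ↥(U k a b) = (T a b).card + (b + (b + 1)) := by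
  rw [U, finrank_span_eq_card (v_indep k a b)]
  rw [Fintype.card_sum, Fintype.card_sum, Fintype.card_sum, Fintype.card_coe,
    Fintype.card_fin, Fintype.card_unit]

end Stmt3Aux

open Stmt3Aux in
/-- **Dimension count from the proof of Proposition 5.2.** Let `S = k[x,y,z,w]`,
`a, b ≥ 0`, `q = x·z^{a+1} − y·w^{a+1}` and `h = z^b·q − x²·w^{a+b}`.  Let
`I_W = (x³, x²y, xy², y³, x·q, y·q, h)` be the saturated ideal of the explicit
quasiprimitive triple line `W` of type `(a,b)`.  Then the degree-`(a+b+2)`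
graded piece of `I_W` has dimension `C(a+b+5,3) − 6a − 4b − 9`. -/
theorem stmt3 (k : Type*) [Field k] (a b : ℕ)
    (x y z w : MvPolynomial (Fin 4) k)
    (hx : x = X 0) (hy : y = X 1) (hz : z = X 2) (hw : w = X 3)
    (q h : MvPolynomial (Fin 4) k)
    (hq : q = x * z ^ (a + 1) - y * w ^ (a + 1))
    (hh : h = z ^ b * q - x ^ 2 * w ^ (a + b))
    (IW : Ideal (MvPolynomial (Fin 4) k))
    (hIW : IW = Ideal.span {x ^ 3, x ^ 2 * y, x * y ^ 2, y ^ 3, x * q, y * q, h}) :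
    (Module.finrank k
        ↥(IW.restrictScalars k ⊓ homogeneousSubmodule (Fin 4) k (a + b + 2)) : ℤ) =
      (Nat.choose (a + b + 5) 3 : ℤ) - 6 * a - 4 * b - 9 := by
  subst hIW hh hq hx hy hz hw
  have hset : ({X 0 ^ 3, X 0 ^ 2 * X 1, X 0 * X 1 ^ 2, X 1 ^ 3,
      X 0 * (X 0 * X 2 ^ (a+1) - X 1 * X 3 ^ (a+1)),
      X 1 * (X 0 * X 2 ^ (a+1) - X 1 * X 3 ^ (a+1)),
      X 2 ^ b * (X 0 * X 2 ^ (a+1) - X 1 * X 3 ^ (a+1)) - X 0 ^ 2 * X 3 ^ (a+b)} :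
        Set (MvPolynomial (Fin 4) k)) = Set.range (g k a b) := by
    ext m
    simp only [Set.mem_range, Set.mem_insert_iff, Set.mem_singleton_iff]
    constructor
    · rintro (rfl|rfl|rfl|rfl|rfl|rfl|rfl)
      exacts [⟨0, rfl⟩, ⟨1, rfl⟩, ⟨2, rfl⟩, ⟨3, rfl⟩, ⟨4, rfl⟩, ⟨5, rfl⟩, ⟨6, rfl⟩]
    · rintro ⟨i, rfl⟩
      fin_cases i <;> simp [g, qp, hp]
  rw [hset, ← span_eq k a b]
  have hrk := finrank_U k a b
  rw [hrk]
  have hc1 := Finset.card_filter_add_card_filter_not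
    (s := Finset.finsuppAntidiag (Finset.univ : Finset (Fin 4)) (a+b+2))
    (p := fun m => 3 ≤ m 0 + m 1)
  have hc2 := card_compl (a+b+2) (by omega)
  have hc3 := card_F (a+b+2)
  rw [show (a+b+2)+3 = a+b+5 by omega] at hc3
  have hT : (T a b).card = (((Finset.finsuppAntidiag
      (Finset.univ : Finset (Fin 4)) (a+b+2))).filter fun m => 3 ≤ m 0 + m 1).card := rfl
  rw [hT]
  push_cast
  omega
end

section
/- The cokernel of ψ : R → R², ψ(1) = (t·w^b, z^{3a+b+2}), is flat as a k[t]-module (equivalently, since k[t] is a principal ideal domain, coker(ψ) has no k[t]-torsion). -/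
open MvPolynomial

/-- Over a PID (domain), a torsion-free module is flat. -/
theorem flat_of_torsionFree' {R M : Type*} [CommRing R] [IsDomain R]
    [IsPrincipalIdealRing R] [AddCommGroup M] [Module R M]
    (h : ∀ p : R, p ≠ 0 → ∀ m : M, p • m = 0 → m = 0) : Module.Flat R M := by
  rw [Module.Flat.iff_lift_lsmul_comp_subtype_injective]
  intro I _
  obtain ⟨p, hp⟩ := (IsPrincipalIdealRing.principal I).principal
  have hpI : p ∈ I := by rw [hp]; exact Submodule.mem_span_singleton_self p
  -- every element of I ⊗ M is a pure tensor p ⊗ m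
  have key : ∀ x : TensorProduct R I M, ∃ m : M, x = (⟨p, hpI⟩ : I) ⊗ₜ[R] m := by
    intro x
    induction x using TensorProduct.induction_on with
    | zero => exact ⟨0, (TensorProduct.tmul_zero _ _).symm⟩
    | tmul q n =>
      obtain ⟨c, hc⟩ : ∃ c, c * p = (q : R) := by
        have hq2 : (q : R) ∈ Ideal.span {p} := hp ▸ q.2
        exact Ideal.mem_span_singleton'.mp hq2
      refine ⟨c • n, ?_⟩
      have hq : (q : I) = c • ⟨p, hpI⟩ := by
        ext
        simpa [smul_eq_mul] using hc.symm
      rw [hq, TensorProduct.smul_tmul]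
    | add x y hx hy =>
      obtain ⟨m₁, hm₁⟩ := hx
      obtain ⟨m₂, hm₂⟩ := hy
      exact ⟨m₁ + m₂, by rw [hm₁, hm₂, TensorProduct.tmul_add]⟩
  intro x y hxy
  obtain ⟨m, rfl⟩ := key x
  obtain ⟨m', rfl⟩ := key y
  simp only [TensorProduct.lift.tmul, LinearMap.coe_comp, Function.comp_apply,
    Submodule.coe_subtype, LinearMap.lsmul_apply] at hxy
  by_cases hp0 : p = 0
  · subst hp0
    have : (⟨(0 : R), hpI⟩ : I) = 0 := rfl
    rw [this, TensorProduct.zero_tmul, TensorProduct.zero_tmul]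
  · have : p • (m - m') = 0 := by rw [smul_sub, hxy, sub_self]
    have hmm : m = m' := by
      have := h p hp0 _ this
      rwa [sub_eq_zero] at this
    rw [hmm]

/-- **Flatness step in the proof of Proposition 2.3.** Let `A = k[t]` and
`R = k[t,z,w]` (realized as `MvPolynomial (Fin 2) A` with `z = X 0`, `w = X 1`
and `t` the image of `Polynomial.X` under the structure map).  Let
`ψ : R → R²` be the `R`-linear map `1 ↦ (t·w^b, z^{3a+b+2})`, whose image is
the cyclic submodule `N` spanned by that pair.  Then `coker ψ = R²/N` is flat
as a `k[t]`-module; equivalently (since `k[t]` is a PID) it has no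
`k[t]`-torsion. -/
theorem stmt4 (k : Type*) [Field k] (a b : ℕ)
    (z w t : MvPolynomial (Fin 2) (Polynomial k))
    (hz : z = X 0) (hw : w = X 1) (ht : t = C Polynomial.X)
    (N : Submodule (MvPolynomial (Fin 2) (Polynomial k))
      (MvPolynomial (Fin 2) (Polynomial k) × MvPolynomial (Fin 2) (Polynomial k)))
    (hN : N = Submodule.span (MvPolynomial (Fin 2) (Polynomial k))
      {(t * w ^ b, z ^ (3 * a + b + 2))}) :
    Module.Flat (Polynomial k)
      ((MvPolynomial (Fin 2) (Polynomial k) × MvPolynomial (Fin 2) (Polynomial k)) ⧸ N) ∧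
    ∀ p : Polynomial k, p ≠ 0 →
      ∀ m : MvPolynomial (Fin 2) (Polynomial k) × MvPolynomial (Fin 2) (Polynomial k),
        (C p : MvPolynomial (Fin 2) (Polynomial k)) • m ∈ N → m ∈ N := by
  subst hz hw ht
  have tors : ∀ p : Polynomial k, p ≠ 0 →
      ∀ m : MvPolynomial (Fin 2) (Polynomial k) × MvPolynomial (Fin 2) (Polynomial k),
        (C p : MvPolynomial (Fin 2) (Polynomial k)) • m ∈ N → m ∈ N := by
    intro p hp m hmem
    rw [hN, Submodule.mem_span_singleton] at hmem
    obtain ⟨r, hr⟩ := hmem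
    have h1 : r * (C Polynomial.X * X 1 ^ b) = C p * m.1 := by
      have := congrArg Prod.fst hr
      simpa [smul_eq_mul] using this
    have h2 : r * X 0 ^ (3 * a + b + 2) = C p * m.2 := by
      have := congrArg Prod.snd hr
      simpa [smul_eq_mul] using this
    have hdvd : (C p : MvPolynomial (Fin 2) (Polynomial k)) ∣ r := by
      rw [C_dvd_iff_dvd_coeff]
      intro d
      have hco : coeff (d + Finsupp.single (0 : Fin 2) (3 * a + b + 2))
          (r * X 0 ^ (3 * a + b + 2)) = coeff d r := by
        rw [X_pow_eq_monomial, coeff_mul_monomial, mul_one]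
      rw [h2, coeff_C_mul] at hco
      exact ⟨_, hco.symm⟩
    obtain ⟨s, hs⟩ := hdvd
    have hCp : (C p : MvPolynomial (Fin 2) (Polynomial k)) ≠ 0 := by simpa using hp
    have hm1 : m.1 = s * (C Polynomial.X * X 1 ^ b) := by
      apply mul_left_cancel₀ hCp
      rw [← h1, hs]; ring
    have hm2 : m.2 = s * X 0 ^ (3 * a + b + 2) := by
      apply mul_left_cancel₀ hCp
      rw [← h2, hs]; ring
    rw [hN, Submodule.mem_span_singleton]
    refine ⟨s, ?_⟩
    apply Prod.ext <;> simp [hm1, hm2, smul_eq_mul]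
  refine ⟨?_, tors⟩
  apply flat_of_torsionFree'
  intro p hp x hx
  obtain ⟨m, rfl⟩ := Submodule.Quotient.mk_surjective N x
  have hshift : p • (Submodule.Quotient.mk m :
      (MvPolynomial (Fin 2) (Polynomial k) × MvPolynomial (Fin 2) (Polynomial k)) ⧸ N)
      = Submodule.Quotient.mk ((C p : MvPolynomial (Fin 2) (Polynomial k)) • m) := by
    rw [← Submodule.Quotient.mk_smul]
    congr 1
    rw [← algebraMap_smul (MvPolynomial (Fin 2) (Polynomial k)) p m,
      MvPolynomial.algebraMap_eq]
  rw [hshift, Submodule.Quotient.mk_eq_zero] at hx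
  rw [show (0 : (MvPolynomial (Fin 2) (Polynomial k) ×
      MvPolynomial (Fin 2) (Polynomial k)) ⧸ N) = Submodule.Quotient.mk 0 from rfl,
    Submodule.Quotient.eq]
  simpa using tors p hp m hx
end

section
/- The elements x³, y³ and z^{3a+b+2} of R belong to the ideal I₃(M₃) generated by the 3×3 minors of the 9×3 matrix M₃; in particular I₃(M₃) contains the regular sequence (x³, y³, z^{3a+b+2}). -/
open MvPolynomial Matrix

noncomputable section

/-- `R = k[t,x,y,z,w]`. -/
abbrev RR (k : Type*) [Field k] := MvPolynomial (Fin 5) k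

variable (k : Type*) [Field k] (a b : ℕ)

/-- `t`. -/
def vt : RR k := X 0
/-- `x`. -/
def vx : RR k := X 1
/-- `y`. -/
def vy : RR k := X 2
/-- `z`. -/
def vz : RR k := X 3
/-- `w`. -/
def vw : RR k := X 4
/-- `f = z^{a+1}`. -/
def pf : RR k := vz k ^ (a + 1)
/-- `g = w^{a+1}`. -/
def pg : RR k := vw k ^ (a + 1)

/-- The 9×3 matrix `M₃`. -/
def M3 : Matrix (Fin 9) (Fin 3) (RR k) :=
  !![pg k a, 0, vz k ^ (a + b);
     -pf k a, pg k a, 0;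
     0, -pf k a, 0;
     vy k, 0, 0;
     -vx k, vy k, 0;
     0, -vx k, 0;
     0, vy k, -(vt k * vw k ^ b);
     0, 0, -vy k;
     0, 0, vx k]

/-- `I₃(M₃)`: the ideal generated by the 3×3 minors of `M₃`, i.e. by the
determinants of all submatrices obtained by selecting three rows. -/
def I3M3 : Ideal (RR k) :=
  Ideal.span {d : RR k | ∃ r : Fin 3 → Fin 9, Function.Injective r ∧
    d = ((M3 k a b).submatrix r id).det}

section Aux

variable {k}

/-- Cancellation for monomial ideals: if `monomial u 1 * p` is in the monomial ideal
generated by `S` and `u` is disjoint from every generator, then `p` is in the ideal. -/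
lemma monomial_cancel {S : Set (Fin 5 →₀ ℕ)} {u : Fin 5 →₀ ℕ}
    (hu : ∀ si ∈ S, ∀ j, si j ≠ 0 → u j = 0) {p : RR k}
    (h : monomial u (1 : k) * p ∈ Ideal.span ((fun s => monomial s (1 : k)) '' S)) :
    p ∈ Ideal.span ((fun s => monomial s (1 : k)) '' S) := by
  rw [mem_ideal_span_monomial_image] at h ⊢
  intro m hm
  have hmem : u + m ∈ (monomial u (1 : k) * p).support := by
    rw [MvPolynomial.mem_support_iff, MvPolynomial.coeff_monomial_mul, one_mul]
    exact MvPolynomial.mem_support_iff.mp hm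
  obtain ⟨si, hsi, hle⟩ := h (u + m) hmem
  refine ⟨si, hsi, ?_⟩
  intro j
  by_cases hz : si j = 0
  · simp [hz]
  · have h1 := hu si hsi j hz
    have h2 : si j ≤ (u + m) j := hle j
    simpa [h1] using h2

/-- Regularity of `r` on `R/I` from ideal cancellation. -/
lemma regmod {I : Ideal (RR k)} {r : RR k} (h : ∀ p : RR k, r * p ∈ I → p ∈ I) :
    IsSMulRegular ((RR k) ⧸ (I • ⊤ : Submodule (RR k) (RR k))) r := by
  have hN : (I • ⊤ : Submodule (RR k) (RR k)) = I := by
    rw [smul_eq_mul, Ideal.mul_top]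
  intro x y hxy
  obtain ⟨x, rfl⟩ := Submodule.Quotient.mk_surjective _ x
  obtain ⟨y, rfl⟩ := Submodule.Quotient.mk_surjective _ y
  have hxy' : (Submodule.Quotient.mk (r • x) : (RR k) ⧸ (I • ⊤ : Submodule (RR k) (RR k))) =
      Submodule.Quotient.mk (r • y) := by
    rw [Submodule.Quotient.mk_smul, Submodule.Quotient.mk_smul]; exact hxy
  rw [Submodule.Quotient.eq, hN] at hxy'
  rw [Submodule.Quotient.eq, hN]
  have hx : r * (x - y) ∈ I := by
    have heq : r • x - r • y = r * (x - y) := by simp only [smul_eq_mul]; ring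
    rwa [heq] at hxy'
  exact h _ hx

/-- Disjointness of singles at different indices. -/
lemma single_disj {i u : Fin 5} (hne : i ≠ u) {n : ℕ} (m : ℕ) {j : Fin 5}
    (hj : Finsupp.single i n j ≠ 0) : Finsupp.single u m j = 0 := by
  have hji : j = i := by
    by_contra hji
    exact hj (Finsupp.single_eq_of_ne' fun h => hji h.symm)
  subst hji
  exact Finsupp.single_eq_of_ne' fun h => hne h.symm

end Aux

/-- **Buchsbaum–Eisenbud verification, first half (proof of Proposition 2.3).**
The ideal `I₃(M₃)` of 3×3 minors of `M₃` contains the regular sequence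
`(x³, y³, z^{3a+b+2})`. -/
theorem stmt6 :
    vx k ^ 3 ∈ I3M3 k a b ∧ vy k ^ 3 ∈ I3M3 k a b ∧
    vz k ^ (3 * a + b + 2) ∈ I3M3 k a b ∧
    RingTheory.Sequence.IsRegular (RR k) [vx k ^ 3, vy k ^ 3, vz k ^ (3 * a + b + 2)] := by
  refine ⟨?_, ?_, ?_, ?_⟩
  · refine Ideal.subset_span ⟨![4, 5, 8], by decide, ?_⟩
    have hM : (M3 k a b).submatrix ![4, 5, 8] id =
        !![-vx k, vy k, 0; 0, -vx k, 0; 0, 0, vx k] := by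
      ext i j; fin_cases i <;> fin_cases j <;> rfl
    rw [hM]
    simp [Matrix.det_fin_three]
    ring
  · refine Ideal.subset_span ⟨![4, 3, 7], by decide, ?_⟩
    have hM : (M3 k a b).submatrix ![4, 3, 7] id =
        !![-vx k, vy k, 0; vy k, 0, 0; 0, 0, -vy k] := by
      ext i j; fin_cases i <;> fin_cases j <;> rfl
    rw [hM]
    simp [Matrix.det_fin_three]
    ring
  · refine Ideal.subset_span ⟨![0, 1, 2], by decide, ?_⟩
    have hM : (M3 k a b).submatrix ![0, 1, 2] id =
        !![pg k a, 0, vz k ^ (a + b); -pf k a, pg k a, 0; 0, -pf k a, 0] := by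
      ext i j; fin_cases i <;> fin_cases j <;> rfl
    rw [hM]
    simp [Matrix.det_fin_three, Matrix.vecHead, Matrix.vecTail, pf, pg]
    rw [← pow_add, ← pow_add]
    ring_nf
  · have hdom : ∀ r : RR k, r ≠ 0 → IsSMulRegular (RR k) r := by
      intro r hr p q hpq
      exact mul_left_cancel₀ hr (by simpa [smul_eq_mul] using hpq)
    have hJ1 : Ideal.span {vx k ^ 3} =
        Ideal.span ((fun s => monomial s (1 : k)) '' {Finsupp.single 1 3}) := by
      rw [Set.image_singleton, ← X_pow_eq_monomial]; rfl
    have hJ2 : Ideal.span {vx k ^ 3, vy k ^ 3} =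
        Ideal.span ((fun s => monomial s (1 : k)) ''
          {Finsupp.single 1 3, Finsupp.single 2 3}) := by
      rw [Set.image_insert_eq, Set.image_singleton, ← X_pow_eq_monomial, ← X_pow_eq_monomial]
      rfl
    have hc1 : ∀ p : RR k, vy k ^ 3 * p ∈ Ideal.span {vx k ^ 3} →
        p ∈ Ideal.span {vx k ^ 3} := by
      intro p hp
      rw [hJ1] at hp ⊢
      have : vy k ^ 3 = monomial (Finsupp.single 2 3) (1 : k) := by
        rw [← X_pow_eq_monomial]; rfl
      rw [this] at hp
      refine monomial_cancel ?_ hp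
      intro si hsi j hj
      rw [Set.mem_singleton_iff] at hsi
      subst hsi
      exact single_disj (by decide) _ hj
    have hc2 : ∀ p : RR k, vz k ^ (3 * a + b + 2) * p ∈ Ideal.span {vx k ^ 3, vy k ^ 3} →
        p ∈ Ideal.span {vx k ^ 3, vy k ^ 3} := by
      intro p hp
      rw [hJ2] at hp ⊢
      have : vz k ^ (3 * a + b + 2) = monomial (Finsupp.single 3 (3 * a + b + 2)) (1 : k) := by
        rw [← X_pow_eq_monomial]; rfl
      rw [this] at hp
      refine monomial_cancel ?_ hp
      intro si hsi j hj
      rcases hsi with hsi | hsi <;> subst hsi <;>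
        exact single_disj (by decide) _ hj
    refine ⟨⟨?_⟩, ?_⟩
    · intro i hi
      simp only [List.length_cons, List.length_nil] at hi
      interval_cases i
      · have hI : Ideal.ofList
            (List.take 0 [vx k ^ 3, vy k ^ 3, vz k ^ (3 * a + b + 2)]) = ⊥ := by
          rw [List.take_zero, Ideal.ofList_nil]
        rw [hI]
        refine regmod ?_
        intro p hp
        simp only [Ideal.mem_bot] at hp ⊢
        rcases mul_eq_zero.mp hp with h | h
        · exact absurd h (pow_ne_zero _ (X_ne_zero 1))
        · exact h
      · have hI : Ideal.ofList
            (List.take 1 [vx k ^ 3, vy k ^ 3, vz k ^ (3 * a + b + 2)]) =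
            Ideal.span {vx k ^ 3} := by
          rw [show List.take 1 [vx k ^ 3, vy k ^ 3, vz k ^ (3 * a + b + 2)] = [vx k ^ 3]
            from rfl, Ideal.ofList_singleton]
        rw [hI]
        exact regmod hc1
      · have hI : Ideal.ofList
            (List.take 2 [vx k ^ 3, vy k ^ 3, vz k ^ (3 * a + b + 2)]) =
            Ideal.span {vx k ^ 3, vy k ^ 3} := by
          rw [show List.take 2 [vx k ^ 3, vy k ^ 3, vz k ^ (3 * a + b + 2)] =
            [vx k ^ 3, vy k ^ 3] from rfl, Ideal.ofList_cons, Ideal.ofList_singleton,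
            ← Ideal.span_union, Set.singleton_union]
        rw [hI]
        exact regmod hc2
    · intro htop
      have h1 : (1 : RR k) ∈ (Ideal.ofList [vx k ^ 3, vy k ^ 3, vz k ^ (3 * a + b + 2)] • ⊤ :
          Submodule (RR k) (RR k)) := htop ▸ Submodule.mem_top
      rw [smul_eq_mul, Ideal.mul_top, Ideal.ofList_cons, Ideal.ofList_cons,
        Ideal.ofList_singleton, ← Ideal.span_union, ← Ideal.span_union,
        Set.singleton_union, Set.singleton_union] at h1
      have hJ3 : Ideal.span {vx k ^ 3, vy k ^ 3, vz k ^ (3 * a + b + 2)} =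
          Ideal.span ((fun s => monomial s (1 : k)) ''
            {Finsupp.single 1 3, Finsupp.single 2 3, Finsupp.single 3 (3 * a + b + 2)}) := by
        rw [Set.image_insert_eq, Set.image_insert_eq, Set.image_singleton,
          ← X_pow_eq_monomial, ← X_pow_eq_monomial, ← X_pow_eq_monomial]
        rfl
      rw [hJ3, mem_ideal_span_monomial_image] at h1
      have h0 : (0 : Fin 5 →₀ ℕ) ∈ (1 : RR k).support := by
        rw [MvPolynomial.mem_support_iff]
        simp
      obtain ⟨si, hsi, hle⟩ := h1 0 h0
      rw [Finsupp.le_def] at hle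
      rcases hsi with hsi | hsi | hsi <;> subst hsi
      · have h3 : (3 : ℕ) ≤ 0 := by simpa using hle 1
        omega
      · have h3 : (3 : ℕ) ≤ 0 := by simpa using hle 2
        omega
      · have h3 : (3 * a + b + 2 : ℕ) ≤ 0 := by simpa using hle 3
        omega

end
end

section
/- The elements x⁶ and y⁶ of R belong to the ideal I₆(M₂) generated by the 6×6 minors of the 7×9 matrix M₂; in particular I₆(M₂) contains the regular sequence (x⁶, y⁶). -/
open MvPolynomial Matrix

noncomputable section

variable (k : Type*) [Field k] (a b : ℕ)

/-- The 7×9 matrix `M₂`. -/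
def M2 : Matrix (Fin 7) (Fin 9) (RR k) :=
  !![vy k, 0, 0, -pg k a, 0, 0, 0, vz k ^ (a + b), 0;
     -vx k, vy k, 0, pf k a, -pg k a, 0, 0, 0, vz k ^ (a + b);
     0, -vx k, vy k, 0, pf k a, -pg k a, 0, 0, 0;
     0, 0, -vx k, 0, 0, pf k a, 0, 0, 0;
     0, 0, 0, vx k, vy k, 0, -vy k, vt k * vw k ^ b, 0;
     0, 0, 0, 0, 0, vy k, vx k, 0, vt k * vw k ^ b;
     0, 0, 0, 0, 0, 0, 0, -vx k, -vy k]

/-- `I₆(M₂)`: the ideal generated by the 6×6 minors of `M₂`, i.e. by the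
determinants of all submatrices obtained by selecting six rows and six
columns. -/
def I6M2 : Ideal (RR k) :=
  Ideal.span {d : RR k | ∃ (r : Fin 6 → Fin 7) (c : Fin 6 → Fin 9),
    Function.Injective r ∧ Function.Injective c ∧
    d = ((M2 k a b).submatrix r c).det}

def r1 : Fin 6 → Fin 7 := ![1,2,3,4,5,6]
def c1 : Fin 6 → Fin 9 := ![0,1,2,3,6,7]
def r2 : Fin 6 → Fin 7 := ![2,1,0,4,5,6]
def c2 : Fin 6 → Fin 9 := ![2,1,0,4,5,8]

set_option maxRecDepth 4000 in
lemma detX : ((M2 k a b).submatrix r1 c1).det = vx k ^ 6 := by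
  have ht : ((M2 k a b).submatrix r1 c1).BlockTriangular id := by
    intro i j hij
    fin_cases i <;> fin_cases j <;>
      first
        | rfl
        | exact absurd hij (by decide)
  rw [Matrix.det_of_upperTriangular ht, Fin.prod_univ_six]
  show -vx k * -vx k * -vx k * vx k * vx k * -vx k = vx k ^ 6
  ring

set_option maxRecDepth 4000 in
lemma detY : ((M2 k a b).submatrix r2 c2).det = -(vy k ^ 6) := by
  have ht : ((M2 k a b).submatrix r2 c2).BlockTriangular id := by
    intro i j hij
    fin_cases i <;> fin_cases j <;>
      first
        | rfl
        | exact absurd hij (by decide)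
  rw [Matrix.det_of_upperTriangular ht, Fin.prod_univ_six]
  show vy k * vy k * vy k * vy k * vy k * -vy k = -(vy k ^ 6)
  ring

lemma memX : vx k ^ 6 ∈ I6M2 k a b :=
  Ideal.subset_span ⟨r1, c1, by decide, by decide, (detX k a b).symm⟩

lemma memY : vy k ^ 6 ∈ I6M2 k a b := by
  have h : -(vy k ^ 6) ∈ I6M2 k a b :=
    Ideal.subset_span ⟨r2, c2, by decide, by decide, (detY k a b).symm⟩
  simpa using neg_mem h

lemma primeX : Prime (vx k) := by
  let e := ((renameEquiv k (Equiv.swap (0 : Fin 5) 1)).trans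
    (MvPolynomial.finSuccEquiv k 4)).toRingEquiv.toMulEquiv
  rw [← MulEquiv.prime_iff e]
  have he : e (vx k) = Polynomial.X := by
    show (MvPolynomial.finSuccEquiv k 4) ((renameEquiv k (Equiv.swap (0 : Fin 5) 1)) (vx k)) = _
    rw [vx, renameEquiv_apply, rename_X, Equiv.swap_apply_right, finSuccEquiv_X_zero]
  rw [he]
  exact Polynomial.prime_X

lemma notdvd : ¬ (vx k ∣ vy k ^ 6) := by
  rintro ⟨c, hc⟩
  have h1 := congrArg (eval (fun i : Fin 5 => if i = 2 then (1 : k) else 0)) hc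
  simp [vx, vy] at h1

lemma smul_top_eq (I : Ideal (RR k)) : (I • ⊤ : Submodule (RR k) (RR k)) = I := by
  rw [smul_eq_mul, Ideal.mul_top]

lemma regXY : RingTheory.Sequence.IsRegular (RR k) [vx k ^ 6, vy k ^ 6] := by
  rw [RingTheory.Sequence.isRegular_iff]
  constructor
  · rw [RingTheory.Sequence.isWeaklyRegular_iff]
    intro i hi
    simp only [List.length_cons, List.length_nil] at hi
    interval_cases i
    · -- x^6 regular on R ⧸ ⊥
      intro p q h
      obtain ⟨p, rfl⟩ := Submodule.Quotient.mk_surjective _ p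
      obtain ⟨q, rfl⟩ := Submodule.Quotient.mk_surjective _ q
      simp only [← Submodule.Quotient.mk_smul] at h
      rw [Submodule.Quotient.eq] at h
      have h0 : vx k ^ 6 • p - vx k ^ 6 • q ∈ (⊥ : Submodule (RR k) (RR k)) := by
        simpa [Ideal.ofList] using h
      rw [Submodule.mem_bot, sub_eq_zero, smul_eq_mul, smul_eq_mul] at h0
      have := mul_left_cancel₀ (pow_ne_zero 6 (X_ne_zero (R := k) 1)) h0
      rw [this]
    · -- y^6 regular on R ⧸ (x^6)
      intro p q h
      obtain ⟨p, rfl⟩ := Submodule.Quotient.mk_surjective _ p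
      obtain ⟨q, rfl⟩ := Submodule.Quotient.mk_surjective _ q
      simp only [← Submodule.Quotient.mk_smul] at h
      rw [Submodule.Quotient.eq] at h
      have hof : Ideal.ofList (List.take 1 [vx k ^ 6, vy k ^ 6]) = Ideal.span {vx k ^ 6} := by
        simp [Ideal.ofList_singleton]
      have h0 : vy k ^ 6 • p - vy k ^ 6 • q ∈ Ideal.span {vx k ^ 6} := by
        rw [hof, smul_top_eq] at h
        exact h
      rw [Ideal.mem_span_singleton] at h0
      have h1 : vx k ^ 6 ∣ vy k ^ 6 * (p - q) := by
        rwa [smul_eq_mul, smul_eq_mul, ← mul_sub] at h0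
      have h2 : vx k ^ 6 ∣ p - q :=
        (primeX k).pow_dvd_of_dvd_mul_left 6 (notdvd k) h1
      rw [Submodule.Quotient.eq, hof, smul_top_eq, Ideal.mem_span_singleton]
      exact h2
  · rw [smul_top_eq]
    intro h
    have h1 : (1 : RR k) ∈ Ideal.ofList [vx k ^ 6, vy k ^ 6] := by
      rw [← h]; trivial
    set φ : RR k →+* k := (eval (fun _ : Fin 5 => (0 : k))) with hφ
    have hle : Ideal.ofList [vx k ^ 6, vy k ^ 6] ≤ RingHom.ker φ := by
      rw [Ideal.span_le]
      rintro r hr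
      simp only [Set.mem_setOf_eq, List.mem_cons, List.mem_singleton, List.not_mem_nil,
        or_false] at hr
      rcases hr with rfl | rfl <;> simp [hφ, vx, vy, RingHom.mem_ker]
    have := hle h1
    rw [RingHom.mem_ker] at this
    simp [hφ] at this

/-- **Buchsbaum–Eisenbud verification, second half (proof of Proposition 2.3).**
The ideal `I₆(M₂)` of 6×6 minors of `M₂` contains the regular sequence
`(x⁶, y⁶)`. -/
theorem stmt7 :
    vx k ^ 6 ∈ I6M2 k a b ∧ vy k ^ 6 ∈ I6M2 k a b ∧
    RingTheory.Sequence.IsRegular (RR k) [vx k ^ 6, vy k ^ 6] :=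
  ⟨memX k a b, memY k a b, regXY k⟩

end
end

section
/- Let M = S/(a, l·f), let J ⊆ M be the S-submodule generated by the class of l, and let M₁ ⊆ J be the S-submodule generated by the classes of l·b and l·c. Then the quotient J/M₁ is isomorphic, as an S-module, to S/(a, b, c). In particular S/(a, b, c) is a subquotient of S/(a, l·f). -/
/-- **Subquotient claim of Example 6.3.** Let `S` be a commutative ring,
`a, l, f ∈ S` with `l` a nonzerodivisor on `S/(a)`, and `b, c ∈ S` with
`f ∈ (b, c)`.  Let `M = S/(a, l·f)`, let `J ⊆ M` be the submodule generated by
the class of `l`, and let `M₁ ⊆ J` be the submodule generated by the classes of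
`l·b` and `l·c`.  Then `J/M₁ ≅ S/(a, b, c)` as `S`-modules; in particular
`S/(a, b, c)` is a subquotient of `S/(a, l·f)`. -/
theorem stmt9 (S : Type*) [CommRing S] (a l f b c : S)
    (hreg : ∀ s : S, l * s ∈ Ideal.span {a} → s ∈ Ideal.span {a})
    (hf : f ∈ Ideal.span {b, c})
    (I : Ideal S) (hI : I = Ideal.span {a, l * f})
    (J : Submodule S (S ⧸ I))
    (hJ : J = Submodule.span S {Ideal.Quotient.mk I l})
    (M₁ : Submodule S (S ⧸ I))
    (hM₁ : M₁ = Submodule.span S {Ideal.Quotient.mk I (l * b), Ideal.Quotient.mk I (l * c)}) :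
    Nonempty ((↥J ⧸ M₁.comap J.subtype) ≃ₗ[S] (S ⧸ Ideal.span {a, b, c})) := by
  classical
  have hmul : ∀ s x : S, s • Ideal.Quotient.mk I x = Ideal.Quotient.mk I (s * x) :=
    fun s x => rfl
  have hlmem : Ideal.Quotient.mk I l ∈ J := by
    rw [hJ]; exact Submodule.mem_span_singleton_self _
  let ψ : S →ₗ[S] J :=
    { toFun := fun s => ⟨s • Ideal.Quotient.mk I l, Submodule.smul_mem J s hlmem⟩
      map_add' := by intro x y; ext; simp [add_smul]
      map_smul' := by intro r x; ext; simp [mul_smul] }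
  let φ := (M₁.comap J.subtype).mkQ.comp ψ
  have hsurj : Function.Surjective φ := by
    intro x
    obtain ⟨⟨y, hy⟩, rfl⟩ := (M₁.comap J.subtype).mkQ_surjective x
    rw [hJ] at hy
    obtain ⟨r, hr⟩ := Submodule.mem_span_singleton.mp hy
    refine ⟨r, ?_⟩
    simp only [φ, ψ, LinearMap.comp_apply, LinearMap.coe_mk, AddHom.coe_mk]
    congr 1
    exact Subtype.ext hr
  -- key membership lemma
  have hkey : ∀ s : S, s • Ideal.Quotient.mk I l ∈ M₁ ↔ s ∈ Ideal.span {a, b, c} := by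
    intro s
    constructor
    · intro hs
      rw [hM₁] at hs
      obtain ⟨p, q, hpq⟩ := Submodule.mem_span_pair.mp hs
      rw [hmul, hmul, hmul, ← map_add] at hpq
      have hmem := Ideal.Quotient.eq.mp hpq
      rw [hI] at hmem
      obtain ⟨α, β, hαβ⟩ := Ideal.mem_span_pair.mp hmem
      obtain ⟨u, v, huv⟩ := Ideal.mem_span_pair.mp hf
      have hla : l * (p * b + q * c - β * f - s) ∈ Ideal.span {a} := by
        have : l * (p * b + q * c - β * f - s) = α * a := by linear_combination -hαβ
        rw [this]
        exact Ideal.mem_span_singleton.mpr (dvd_mul_left a α)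
      obtain ⟨γ, hγ⟩ := Ideal.mem_span_singleton'.mp (hreg _ hla)
      have hrep : s = (-γ) * a + ((p - β * u) * b + (q - β * v) * c) := by
        linear_combination hγ + β * huv
      rw [hrep]
      exact add_mem (Ideal.mul_mem_left _ _ (Ideal.subset_span (by simp)))
        (add_mem (Ideal.mul_mem_left _ _ (Ideal.subset_span (by simp)))
          (Ideal.mul_mem_left _ _ (Ideal.subset_span (by simp))))
    · intro hs
      rw [show ({a, b, c} : Set S) = insert a {b, c} from rfl] at hs
      obtain ⟨r, z, hz, hsz⟩ := Ideal.mem_span_insert.mp hs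
      obtain ⟨p, q, hpq⟩ := Ideal.mem_span_pair.mp hz
      have heq : s • Ideal.Quotient.mk I l
          = p • Ideal.Quotient.mk I (l * b) + q • Ideal.Quotient.mk I (l * c) := by
        rw [hmul, hmul, hmul, ← map_add]
        refine Ideal.Quotient.eq.mpr ?_
        have : s * l - (p * (l * b) + q * (l * c)) = (r * l) * a := by
          linear_combination l * hsz - l * hpq
        rw [this, hI]
        exact Ideal.mul_mem_left _ _ (Ideal.subset_span (by simp))
      rw [hM₁, heq]
      exact add_mem (Submodule.smul_mem _ _ (Submodule.subset_span (by simp)))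
        (Submodule.smul_mem _ _ (Submodule.subset_span (by simp)))
  have hker : LinearMap.ker φ = (Ideal.span {a, b, c} : Ideal S) := by
    ext s
    simp only [φ, LinearMap.mem_ker, LinearMap.comp_apply, Submodule.mkQ_apply,
      Submodule.Quotient.mk_eq_zero, Submodule.mem_comap, Submodule.coe_subtype]
    exact hkey s
  exact ⟨(φ.quotKerEquivOfSurjective hsurj).symm.trans (Submodule.quotEquivOfEq _ _ hker)⟩
end

section
/- The module M = I/(x,y)³ is annihilated by the ideal (x, y), hence is a module over k[z,w] ≅ S/(x,y), and as a k[z,w]-module it is free with basis the residue classes of x·q, y·q and x²·z^{a+b} (homogeneous of degrees a+3, a+3 and a+b+2 respectively); that is, every element of I is congruent modulo (x,y)³ to u·(x·q) + v·(y·q) + s·(x²·z^{a+b}) for uniquely determined u, v, s ∈ k[z,w]. -/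
open MvPolynomial

namespace Stmt12Aux

variable {k : Type*} [Field k]

lemma coeff_mul_ne_zero {p q : MvPolynomial (Fin 4) k} {n : Fin 4 →₀ ℕ}
    (h : coeff n (p * q) ≠ 0) :
    ∃ n₁ n₂ : (Fin 4 →₀ ℕ), n₁ + n₂ = n ∧ coeff n₁ p ≠ 0 ∧ coeff n₂ q ≠ 0 := by
  rw [coeff_mul] at h
  obtain ⟨⟨n₁, n₂⟩, hmem, hne⟩ := Finset.exists_ne_zero_of_sum_ne_zero h
  exact ⟨n₁, n₂, Finset.HasAntidiagonal.mem_antidiagonal.mp hmem,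
    fun h1 => hne (by simp [h1]), fun h2 => hne (by simp [h2])⟩

/-- The ideal of polynomials all of whose monomials have `x,y`-degree at least `d`. -/
def T (k : Type*) [Field k] (d : ℕ) : Ideal (MvPolynomial (Fin 4) k) where
  carrier := {p | ∀ n : Fin 4 →₀ ℕ, coeff n p ≠ 0 → d ≤ n 0 + n 1}
  add_mem' := by
    intro p q hp hq n hn
    by_cases h : coeff n p = 0
    · exact hq n (fun h' => hn (by simp [coeff_add, h, h']))
    · exact hp n h
  zero_mem' := by intro n hn; simp at hn
  smul_mem' := by
    intro c p hp n hn
    rw [smul_eq_mul] at hn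
    obtain ⟨n₁, n₂, rfl, -, h2⟩ := coeff_mul_ne_zero hn
    have := hp n₂ h2
    simp only [Finsupp.add_apply]
    omega

lemma mem_T {d : ℕ} {p : MvPolynomial (Fin 4) k} :
    p ∈ T k d ↔ ∀ n : Fin 4 →₀ ℕ, coeff n p ≠ 0 → d ≤ n 0 + n 1 := Iff.rfl

lemma T_mul (i j : ℕ) : T k i * T k j ≤ T k (i + j) := by
  rw [Ideal.mul_le]
  intro r hr s hs n hn
  obtain ⟨n₁, n₂, rfl, h1, h2⟩ := coeff_mul_ne_zero hn
  have := hr n₁ h1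
  have := hs n₂ h2
  simp only [Finsupp.add_apply]
  omega

lemma span_le_T1 : Ideal.span {X (0 : Fin 4), X 1} ≤ T k 1 := by
  rw [Ideal.span_le]
  have main : ∀ i : Fin 4, i = 0 ∨ i = 1 → (X i : MvPolynomial (Fin 4) k) ∈ T k 1 := by
    intro i hi n hn
    have eX : (X i : MvPolynomial (Fin 4) k) = monomial (Finsupp.single i 1) 1 := by
      rw [← X_pow_eq_monomial, pow_one]
    rw [eX, coeff_monomial] at hn
    split_ifs at hn with h
    · subst h
      rcases hi with rfl | rfl <;> simp [Finsupp.single_apply]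
    · exact absurd rfl hn
  rintro g hg
  simp only [Set.mem_insert_iff, Set.mem_singleton_iff] at hg
  rcases hg with rfl | rfl
  · exact main 0 (Or.inl rfl)
  · exact main 1 (Or.inr rfl)

lemma K3_le_T3 :
    (Ideal.span {X (0 : Fin 4), X 1} : Ideal (MvPolynomial (Fin 4) k)) ^ 3 ≤ T k 3 := by
  have h1 : Ideal.span {X (0 : Fin 4), X 1} ≤ T k 1 := span_le_T1
  calc (Ideal.span {X (0 : Fin 4), X 1}) ^ 3
      = Ideal.span {X (0 : Fin 4), X 1} * Ideal.span {X (0 : Fin 4), X 1} *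
        Ideal.span {X (0 : Fin 4), X 1} := by ring
    _ ≤ T k 1 * T k 1 * T k 1 :=
        mul_le_mul' (mul_le_mul' h1 h1) h1
    _ ≤ T k 2 * T k 1 := mul_le_mul' (T_mul 1 1) le_rfl
    _ ≤ T k 3 := T_mul 2 1

lemma supported_coeff_eq_zero {p : MvPolynomial (Fin 4) k}
    (hp : p ∈ supported k ({2, 3} : Set (Fin 4))) {n : Fin 4 →₀ ℕ}
    (h : n 0 ≠ 0 ∨ n 1 ≠ 0) : coeff n p = 0 := by
  by_contra hc
  rw [mem_supported] at hp
  rcases h with h | h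
  · have h0 : (0 : Fin 4) ∈ p.vars :=
      (mem_vars 0).mpr ⟨n, mem_support_iff.mpr hc, Finsupp.mem_support_iff.mpr h⟩
    have := hp (Finset.mem_coe.mpr h0)
    simp [Set.mem_insert_iff] at this
  · have h1 : (1 : Fin 4) ∈ p.vars :=
      (mem_vars 1).mpr ⟨n, mem_support_iff.mpr hc, Finsupp.mem_support_iff.mpr h⟩
    have := hp (Finset.mem_coe.mpr h1)
    simp [Set.mem_insert_iff] at this

noncomputable def pr (k : Type*) [Field k] :
    MvPolynomial (Fin 4) k →ₐ[k] MvPolynomial (Fin 4) k :=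
  aeval (fun i : Fin 4 => if (i : ℕ) < 2 then 0 else X i)

lemma pr_mem_supported (p : MvPolynomial (Fin 4) k) :
    pr k p ∈ supported k ({2, 3} : Set (Fin 4)) := by
  induction p using MvPolynomial.induction_on with
  | C a => rw [show pr k (C a) = algebraMap k _ a from aeval_C _ a]
           exact Subalgebra.algebraMap_mem _ a
  | add p q hp hq => rw [map_add]; exact add_mem hp hq
  | mul_X p i hp =>
      rw [map_mul, show pr k (X i) = if (i : ℕ) < 2 then 0 else X i from aeval_X _ i]
      refine mul_mem hp ?_
      split_ifs with h
      · exact zero_mem _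
      · rw [X_mem_supported]
        fin_cases i <;> simp_all

lemma sub_pr_mem (p : MvPolynomial (Fin 4) k) :
    p - pr k p ∈ Ideal.span {X (0 : Fin 4), X 1} := by
  induction p using MvPolynomial.induction_on with
  | C a => rw [show pr k (C a) = algebraMap k _ a from aeval_C _ a, algebraMap_eq, sub_self]
           exact zero_mem _
  | add p q hp hq =>
      rw [map_add, show p + q - (pr k p + pr k q) = (p - pr k p) + (q - pr k q) by ring]
      exact add_mem hp hq
  | mul_X p i hp =>
      rw [map_mul, show pr k (X i) = if (i : ℕ) < 2 then 0 else X i from aeval_X _ i]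
      split_ifs with h
      · rw [mul_zero, sub_zero]
        refine Ideal.mul_mem_left _ p (Ideal.subset_span ?_)
        fin_cases i
        · exact Set.mem_insert _ _
        · exact Set.mem_insert_of_mem _ rfl
        · exact absurd h (by norm_num)
        · exact absurd h (by norm_num)
      · rw [show p * X i - pr k p * X i = (p - pr k p) * X i by ring]
        exact Ideal.mul_mem_right _ _ hp

lemma core (a b : ℕ) {U V S : MvPolynomial (Fin 4) k}
    (hU : U ∈ supported k ({2, 3} : Set (Fin 4)))
    (hV : V ∈ supported k ({2, 3} : Set (Fin 4)))
    (hS : S ∈ supported k ({2, 3} : Set (Fin 4)))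
    (hm : U * (X 0 * (X 0 * X 3 ^ (a + 1) - X 1 * X 2 ^ (a + 1))) +
          V * (X 1 * (X 0 * X 3 ^ (a + 1) - X 1 * X 2 ^ (a + 1))) +
          S * (X 0 ^ 2 * X 2 ^ (a + b)) ∈ T k 3) :
    U = 0 ∧ V = 0 ∧ S = 0 := by
  have hz : (X 2 : MvPolynomial (Fin 4) k) ∈ supported k ({2, 3} : Set (Fin 4)) := by
    rw [X_mem_supported]; exact Set.mem_insert _ _
  have hw : (X 3 : MvPolynomial (Fin 4) k) ∈ supported k ({2, 3} : Set (Fin 4)) := by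
    rw [X_mem_supported]; exact Set.mem_insert_of_mem _ rfl
  set A : MvPolynomial (Fin 4) k := X 3 ^ (a + 1) * U + X 2 ^ (a + b) * S with hA
  set B : MvPolynomial (Fin 4) k := X 3 ^ (a + 1) * V - X 2 ^ (a + 1) * U with hB
  set C' : MvPolynomial (Fin 4) k := -(X 2 ^ (a + 1) * V) with hC
  have hAs : A ∈ supported k ({2, 3} : Set (Fin 4)) :=
    add_mem (mul_mem (pow_mem hw _) hU) (mul_mem (pow_mem hz _) hS)
  have hBs : B ∈ supported k ({2, 3} : Set (Fin 4)) :=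
    sub_mem (mul_mem (pow_mem hw _) hV) (mul_mem (pow_mem hz _) hU)
  have hCs : C' ∈ supported k ({2, 3} : Set (Fin 4)) :=
    neg_mem (mul_mem (pow_mem hz _) hV)
  set d20 : Fin 4 →₀ ℕ := Finsupp.single 0 2 with hd20
  set d11 : Fin 4 →₀ ℕ := Finsupp.single 0 1 + Finsupp.single 1 1 with hd11
  set d02 : Fin 4 →₀ ℕ := Finsupp.single 1 2 with hd02
  have eX0 : (X 0 : MvPolynomial (Fin 4) k) = monomial (Finsupp.single 0 1) 1 := by
    rw [← X_pow_eq_monomial, pow_one]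
  have eX1 : (X 1 : MvPolynomial (Fin 4) k) = monomial (Finsupp.single 1 1) 1 := by
    rw [← X_pow_eq_monomial, pow_one]
  have e20 : (monomial d20 1 : MvPolynomial (Fin 4) k) = X 0 ^ 2 := (X_pow_eq_monomial).symm
  have e02 : (monomial d02 1 : MvPolynomial (Fin 4) k) = X 1 ^ 2 := (X_pow_eq_monomial).symm
  have e11 : (monomial d11 1 : MvPolynomial (Fin 4) k) = X 0 * X 1 := by
    rw [eX0, eX1, monomial_mul, one_mul]
  have hdec : U * (X 0 * (X 0 * X 3 ^ (a + 1) - X 1 * X 2 ^ (a + 1))) +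
          V * (X 1 * (X 0 * X 3 ^ (a + 1) - X 1 * X 2 ^ (a + 1))) +
          S * (X 0 ^ 2 * X 2 ^ (a + b)) =
      A * monomial d20 1 + B * monomial d11 1 + C' * monomial d02 1 := by
    rw [e20, e02, e11, hA, hB, hC]; ring
  rw [hdec] at hm
  -- generic coefficient vanishing for the whole element
  have hzero : ∀ n : Fin 4 →₀ ℕ, n 0 + n 1 < 3 →
      coeff n (A * monomial d20 1 + B * monomial d11 1 + C' * monomial d02 1) = 0 := by
    intro n hn
    by_contra hc
    exact absurd (hm n hc) (by omega)
  -- extract each slot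
  have slot : ∀ m : Fin 4 →₀ ℕ, m 0 = 0 → m 1 = 0 → ∀ P : MvPolynomial (Fin 4) k,
      ∀ d : Fin 4 →₀ ℕ, coeff (m + d) (P * monomial d 1) = coeff m P := by
    intro m h0 h1 P d
    rw [coeff_mul_monomial', if_pos le_add_self, add_tsub_cancel_right, mul_one]
  have noslot : ∀ m : Fin 4 →₀ ℕ, ∀ d e : Fin 4 →₀ ℕ, ∀ P : MvPolynomial (Fin 4) k,
      ¬ e ≤ m + d → coeff (m + d) (P * monomial e 1) = 0 := by
    intro m d e P h
    rw [coeff_mul_monomial', if_neg h]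
  have hC0 : C' = 0 := by
    ext m
    rw [coeff_zero]
    by_cases hm01 : m 0 ≠ 0 ∨ m 1 ≠ 0
    · exact supported_coeff_eq_zero hCs hm01
    push_neg at hm01
    obtain ⟨h0, h1⟩ := hm01
    have key := hzero (m + d02) (by simp [hd02, Finsupp.add_apply, Finsupp.single_apply, h0, h1])
    rw [coeff_add, coeff_add, slot m h0 h1 C' d02,
        noslot m d02 d20 A (fun h => by
          have := Finsupp.le_def.mp h 0
          simp [hd20, hd02, Finsupp.single_apply, h0] at this),
        noslot m d02 d11 B (fun h => by
          have := Finsupp.le_def.mp h 0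
          simp [hd11, hd02, Finsupp.single_apply, h0] at this)] at key
    simpa using key
  have hV0 : V = 0 := by
    have : (X 2 : MvPolynomial (Fin 4) k) ^ (a + 1) * V = 0 := by
      have := hC0; rw [hC, neg_eq_zero] at this; exact this
    rcases mul_eq_zero.mp this with h | h
    · exact absurd h (pow_ne_zero _ (X_ne_zero 2))
    · exact h
  have hB0 : B = 0 := by
    ext m
    rw [coeff_zero]
    by_cases hm01 : m 0 ≠ 0 ∨ m 1 ≠ 0
    · exact supported_coeff_eq_zero hBs hm01
    push_neg at hm01
    obtain ⟨h0, h1⟩ := hm01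
    have key := hzero (m + d11) (by simp [hd11, Finsupp.add_apply, Finsupp.single_apply, h0, h1])
    rw [coeff_add, coeff_add, slot m h0 h1 B d11,
        noslot m d11 d20 A (fun h => by
          have := Finsupp.le_def.mp h 0
          simp [hd20, hd11, Finsupp.single_apply, h0] at this),
        noslot m d11 d02 C' (fun h => by
          have := Finsupp.le_def.mp h 1
          simp [hd02, hd11, Finsupp.single_apply, h1] at this)] at key
    simpa using key
  have hU0 : U = 0 := by
    have : (X 2 : MvPolynomial (Fin 4) k) ^ (a + 1) * U = 0 := by
      have := hB0; rw [hB, hV0, mul_zero, zero_sub, neg_eq_zero] at this; exact this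
    rcases mul_eq_zero.mp this with h | h
    · exact absurd h (pow_ne_zero _ (X_ne_zero 2))
    · exact h
  have hA0 : A = 0 := by
    ext m
    rw [coeff_zero]
    by_cases hm01 : m 0 ≠ 0 ∨ m 1 ≠ 0
    · exact supported_coeff_eq_zero hAs hm01
    push_neg at hm01
    obtain ⟨h0, h1⟩ := hm01
    have key := hzero (m + d20) (by simp [hd20, Finsupp.add_apply, Finsupp.single_apply, h0, h1])
    rw [coeff_add, coeff_add, slot m h0 h1 A d20,
        noslot m d20 d11 B (fun h => by
          have := Finsupp.le_def.mp h 1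
          simp [hd20, hd11, Finsupp.single_apply, h1] at this),
        noslot m d20 d02 C' (fun h => by
          have := Finsupp.le_def.mp h 1
          simp [hd20, hd02, Finsupp.single_apply, h1] at this)] at key
    simpa using key
  have hS0 : S = 0 := by
    have : (X 2 : MvPolynomial (Fin 4) k) ^ (a + b) * S = 0 := by
      have := hA0; rw [hA, hU0, mul_zero, zero_add] at this; exact this
    rcases mul_eq_zero.mp this with h | h
    · exact absurd h (pow_ne_zero _ (X_ne_zero 2))
    · exact h
  exact ⟨hU0, hV0, hS0⟩

end Stmt12Aux

open Stmt12Aux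

set_option maxHeartbeats 1000000 in
/-- **Module structure of `I_{W₀}/I_{L₀}³` (proof of Proposition 2.3).** Let
`S = k[x,y,z,w]`, `a, b ≥ 0`, `q = x·w^{a+1} − y·z^{a+1}`, and
`I = (x³, x²y, xy², y³, x·q, y·q, x²·z^{a+b})`, the ideal of the special fibre
`W₀`.  Then `M = I/(x,y)³` is annihilated by `(x, y)` — i.e. `x·I` and `y·I`
lie in `(x,y)³` — and, as a module over `k[z,w] ≅ S/(x,y)`, it is free with
basis the residue classes of `x·q`, `y·q` and `x²·z^{a+b}`: every element of
`I` is congruent modulo `(x,y)³` to `u·(x·q) + v·(y·q) + s·(x²·z^{a+b})` for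
uniquely determined `u, v, s ∈ k[z,w]`. -/
theorem stmt12 (k : Type*) [Field k] (a b : ℕ)
    (x y z w : MvPolynomial (Fin 4) k)
    (hx : x = X 0) (hy : y = X 1) (hz : z = X 2) (hw : w = X 3)
    (q : MvPolynomial (Fin 4) k)
    (hq : q = x * w ^ (a + 1) - y * z ^ (a + 1))
    (I : Ideal (MvPolynomial (Fin 4) k))
    (hI : I = Ideal.span {x ^ 3, x ^ 2 * y, x * y ^ 2, y ^ 3,
      x * q, y * q, x ^ 2 * z ^ (a + b)})
    (K : Ideal (MvPolynomial (Fin 4) k))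
    (hK : K = Ideal.span {x, y} ^ 3) :
    (∀ p ∈ I, x * p ∈ K ∧ y * p ∈ K) ∧
    (∀ p ∈ I, ∃! uvs : MvPolynomial (Fin 4) k × MvPolynomial (Fin 4) k ×
        MvPolynomial (Fin 4) k,
      uvs.1 ∈ supported k ({2, 3} : Set (Fin 4)) ∧
      uvs.2.1 ∈ supported k ({2, 3} : Set (Fin 4)) ∧
      uvs.2.2 ∈ supported k ({2, 3} : Set (Fin 4)) ∧
      p - (uvs.1 * (x * q) + uvs.2.1 * (y * q) +
        uvs.2.2 * (x ^ 2 * z ^ (a + b))) ∈ K) := by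
  subst hq hI hK hx hy hz hw
  set q' : MvPolynomial (Fin 4) k := X 0 * X 3 ^ (a + 1) - X 1 * X 2 ^ (a + 1) with hq'
  set G : Set (MvPolynomial (Fin 4) k) :=
    {X 0 ^ 3, X 0 ^ 2 * X 1, X 0 * X 1 ^ 2, X 1 ^ 3, X 0 * q', X 1 * q',
      X 0 ^ 2 * X 2 ^ (a + b)} with hG
  set J : Ideal (MvPolynomial (Fin 4) k) := Ideal.span {X 0, X 1} with hJ
  have hx0 : (X 0 : MvPolynomial (Fin 4) k) ∈ J := Ideal.subset_span (Set.mem_insert _ _)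
  have hy0 : (X 1 : MvPolynomial (Fin 4) k) ∈ J :=
    Ideal.subset_span (Set.mem_insert_of_mem _ rfl)
  have m30 : (X 0 : MvPolynomial (Fin 4) k) ^ 3 ∈ J ^ 3 := Ideal.pow_mem_pow hx0 3
  have m21 : (X 0 : MvPolynomial (Fin 4) k) ^ 2 * X 1 ∈ J ^ 3 := by
    rw [pow_succ]; exact Ideal.mul_mem_mul (Ideal.pow_mem_pow hx0 2) hy0
  have m12 : (X 0 : MvPolynomial (Fin 4) k) * X 1 ^ 2 ∈ J ^ 3 := by
    rw [mul_comm, pow_succ]; exact Ideal.mul_mem_mul (Ideal.pow_mem_pow hy0 2) hx0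
  have m03 : (X 1 : MvPolynomial (Fin 4) k) ^ 3 ∈ J ^ 3 := Ideal.pow_mem_pow hy0 3
  -- Part 1
  have part1 : ∀ p ∈ Ideal.span G, X 0 * p ∈ J ^ 3 ∧ X 1 * p ∈ J ^ 3 := by
    intro p hp
    refine Submodule.span_induction (fun g hg => ?_)
      ⟨by rw [mul_zero]; exact zero_mem _, by rw [mul_zero]; exact zero_mem _⟩
      (fun p q _ _ hp hq =>
        ⟨by rw [mul_add]; exact add_mem hp.1 hq.1,
         by rw [mul_add]; exact add_mem hp.2 hq.2⟩)
      (fun c p _ hp =>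
        ⟨by rw [smul_eq_mul, show X 0 * (c * p) = c * (X 0 * p) by ring]
            exact Ideal.mul_mem_left _ _ hp.1,
         by rw [smul_eq_mul, show X 1 * (c * p) = c * (X 1 * p) by ring]
            exact Ideal.mul_mem_left _ _ hp.2⟩) hp
    simp only [hG, Set.mem_insert_iff, Set.mem_singleton_iff] at hg
    rcases hg with rfl | rfl | rfl | rfl | rfl | rfl | rfl
    · exact ⟨Ideal.mul_mem_left _ _ m30, Ideal.mul_mem_left _ _ m30⟩
    · exact ⟨Ideal.mul_mem_left _ _ m21, Ideal.mul_mem_left _ _ m21⟩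
    · exact ⟨Ideal.mul_mem_left _ _ m12, Ideal.mul_mem_left _ _ m12⟩
    · exact ⟨Ideal.mul_mem_left _ _ m03, Ideal.mul_mem_left _ _ m03⟩
    · constructor
      · rw [show X 0 * (X 0 * q') =
            X 3 ^ (a + 1) * (X 0 ^ 3) - X 2 ^ (a + 1) * (X 0 ^ 2 * X 1) by rw [hq']; ring]
        exact sub_mem (Ideal.mul_mem_left _ _ m30) (Ideal.mul_mem_left _ _ m21)
      · rw [show X 1 * (X 0 * q') =
            X 3 ^ (a + 1) * (X 0 ^ 2 * X 1) - X 2 ^ (a + 1) * (X 0 * X 1 ^ 2) by rw [hq']; ring]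
        exact sub_mem (Ideal.mul_mem_left _ _ m21) (Ideal.mul_mem_left _ _ m12)
    · constructor
      · rw [show X 0 * (X 1 * q') =
            X 3 ^ (a + 1) * (X 0 ^ 2 * X 1) - X 2 ^ (a + 1) * (X 0 * X 1 ^ 2) by rw [hq']; ring]
        exact sub_mem (Ideal.mul_mem_left _ _ m21) (Ideal.mul_mem_left _ _ m12)
      · rw [show X 1 * (X 1 * q') =
            X 3 ^ (a + 1) * (X 0 * X 1 ^ 2) - X 2 ^ (a + 1) * (X 1 ^ 3) by rw [hq']; ring]
        exact sub_mem (Ideal.mul_mem_left _ _ m12) (Ideal.mul_mem_left _ _ m03)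
    · constructor
      · rw [show (X 0 : MvPolynomial (Fin 4) k) * (X 0 ^ 2 * X 2 ^ (a + b)) = X 2 ^ (a + b) * (X 0 ^ 3) by ring]
        exact Ideal.mul_mem_left _ _ m30
      · rw [show (X 1 : MvPolynomial (Fin 4) k) * (X 0 ^ 2 * X 2 ^ (a + b)) = X 2 ^ (a + b) * (X 0 ^ 2 * X 1) by ring]
        exact Ideal.mul_mem_left _ _ m21
  -- multiplication by elements of J
  have rmul : ∀ r ∈ J, ∀ p ∈ Ideal.span G, r * p ∈ J ^ 3 := by
    intro r hr p hp
    refine Submodule.span_induction (fun g hg => ?_)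
      (by rw [zero_mul]; exact zero_mem _)
      (fun r s _ _ hr hs => by rw [add_mul]; exact add_mem hr hs)
      (fun c r _ hr => by
        rw [smul_eq_mul, show c * r * p = c * (r * p) by ring]
        exact Ideal.mul_mem_left _ _ hr) hr
    simp only [Set.mem_insert_iff, Set.mem_singleton_iff] at hg
    rcases hg with rfl | rfl
    · exact (part1 p hp).1
    · exact (part1 p hp).2
  -- membership of the three distinguished generators
  have g5 : X 0 * q' ∈ Ideal.span G := Ideal.subset_span (by
    simp only [hG, Set.mem_insert_iff, Set.mem_singleton_iff]; tauto)
  have g6 : X 1 * q' ∈ Ideal.span G := Ideal.subset_span (by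
    simp only [hG, Set.mem_insert_iff, Set.mem_singleton_iff]; tauto)
  have g7 : (X 0 : MvPolynomial (Fin 4) k) ^ 2 * X 2 ^ (a + b) ∈ Ideal.span G :=
    Ideal.subset_span (by
      simp only [hG, Set.mem_insert_iff, Set.mem_singleton_iff]; tauto)
  -- existence
  have exist : ∀ p ∈ Ideal.span G, ∃ u v s : MvPolynomial (Fin 4) k,
      u ∈ supported k ({2, 3} : Set (Fin 4)) ∧
      v ∈ supported k ({2, 3} : Set (Fin 4)) ∧
      s ∈ supported k ({2, 3} : Set (Fin 4)) ∧
      p - (u * (X 0 * q') + v * (X 1 * q') + s * (X 0 ^ 2 * X 2 ^ (a + b))) ∈ J ^ 3 := by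
    intro p hp
    refine Submodule.span_induction (fun g hg => ?_)
      ⟨0, 0, 0, zero_mem _, zero_mem _, zero_mem _, by
        rw [show (0 : MvPolynomial (Fin 4) k) -
          (0 * (X 0 * q') + 0 * (X 1 * q') + 0 * (X 0 ^ 2 * X 2 ^ (a + b))) = 0 by ring]
        exact zero_mem _⟩
      (fun p p' _ _ hp hp' => ?_) (fun c p _ hp => ?_) hp
    · simp only [hG, Set.mem_insert_iff, Set.mem_singleton_iff] at hg
      have triv : ∀ g : MvPolynomial (Fin 4) k, g ∈ J ^ 3 →
          ∃ u v s : MvPolynomial (Fin 4) k,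
            u ∈ supported k ({2, 3} : Set (Fin 4)) ∧
            v ∈ supported k ({2, 3} : Set (Fin 4)) ∧
            s ∈ supported k ({2, 3} : Set (Fin 4)) ∧
            g - (u * (X 0 * q') + v * (X 1 * q') + s * (X 0 ^ 2 * X 2 ^ (a + b))) ∈ J ^ 3 := by
        intro g hg
        exact ⟨0, 0, 0, zero_mem _, zero_mem _, zero_mem _, by
          rw [show g - (0 * (X 0 * q') + 0 * (X 1 * q') +
            0 * (X 0 ^ 2 * X 2 ^ (a + b))) = g by ring]
          exact hg⟩
      rcases hg with rfl | rfl | rfl | rfl | rfl | rfl | rfl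
      · exact triv _ m30
      · exact triv _ m21
      · exact triv _ m12
      · exact triv _ m03
      · exact ⟨1, 0, 0, one_mem _, zero_mem _, zero_mem _, by
          rw [show X 0 * q' - (1 * (X 0 * q') + 0 * (X 1 * q') +
            0 * (X 0 ^ 2 * X 2 ^ (a + b))) = 0 by ring]
          exact zero_mem _⟩
      · exact ⟨0, 1, 0, zero_mem _, one_mem _, zero_mem _, by
          rw [show X 1 * q' - (0 * (X 0 * q') + 1 * (X 1 * q') +
            0 * (X 0 ^ 2 * X 2 ^ (a + b))) = 0 by ring]
          exact zero_mem _⟩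
      · exact ⟨0, 0, 1, zero_mem _, zero_mem _, one_mem _, by
          rw [show X 0 ^ 2 * X 2 ^ (a + b) - (0 * (X 0 * q') + 0 * (X 1 * q') +
            1 * (X 0 ^ 2 * X 2 ^ (a + b))) = 0 by ring]
          exact zero_mem _⟩
    · obtain ⟨u, v, s, hu, hv, hs, hd⟩ := hp
      obtain ⟨u', v', s', hu', hv', hs', hd'⟩ := hp'
      refine ⟨u + u', v + v', s + s', add_mem hu hu', add_mem hv hv', add_mem hs hs', ?_⟩
      rw [show p + p' - ((u + u') * (X 0 * q') + (v + v') * (X 1 * q') +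
          (s + s') * (X 0 ^ 2 * X 2 ^ (a + b))) =
        (p - (u * (X 0 * q') + v * (X 1 * q') + s * (X 0 ^ 2 * X 2 ^ (a + b)))) +
        (p' - (u' * (X 0 * q') + v' * (X 1 * q') + s' * (X 0 ^ 2 * X 2 ^ (a + b)))) by ring]
      exact add_mem hd hd'
    · obtain ⟨u, v, s, hu, hv, hs, hd⟩ := hp
      refine ⟨pr k c * u, pr k c * v, pr k c * s,
        mul_mem (pr_mem_supported c) hu, mul_mem (pr_mem_supported c) hv,
        mul_mem (pr_mem_supported c) hs, ?_⟩
      have hbracket : u * (X 0 * q') + v * (X 1 * q') + s * (X 0 ^ 2 * X 2 ^ (a + b)) ∈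
          Ideal.span G :=
        add_mem (add_mem (Ideal.mul_mem_left _ _ g5) (Ideal.mul_mem_left _ _ g6))
          (Ideal.mul_mem_left _ _ g7)
      rw [smul_eq_mul, show c * p - (pr k c * u * (X 0 * q') + pr k c * v * (X 1 * q') +
          pr k c * s * (X 0 ^ 2 * X 2 ^ (a + b))) =
        c * (p - (u * (X 0 * q') + v * (X 1 * q') + s * (X 0 ^ 2 * X 2 ^ (a + b)))) +
        (c - pr k c) * (u * (X 0 * q') + v * (X 1 * q') + s * (X 0 ^ 2 * X 2 ^ (a + b)))
          by ring]
      exact add_mem (Ideal.mul_mem_left _ _ hd) (rmul _ (sub_pr_mem c) _ hbracket)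
  refine ⟨part1, ?_⟩
  intro p hp
  obtain ⟨u, v, s, hu, hv, hs, hd⟩ := exist p hp
  refine ⟨(u, v, s), ⟨hu, hv, hs, hd⟩, ?_⟩
  rintro ⟨u', v', s'⟩ ⟨hu', hv', hs', hd'⟩
  have hcomb : (u' - u) * (X 0 * (X 0 * X 3 ^ (a + 1) - X 1 * X 2 ^ (a + 1))) +
      (v' - v) * (X 1 * (X 0 * X 3 ^ (a + 1) - X 1 * X 2 ^ (a + 1))) +
      (s' - s) * (X 0 ^ 2 * X 2 ^ (a + b)) ∈ T k 3 := by
    refine K3_le_T3 ?_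
    have := sub_mem hd hd'
    rw [show p - (u * (X 0 * q') + v * (X 1 * q') + s * (X 0 ^ 2 * X 2 ^ (a + b))) -
        (p - (u' * (X 0 * q') + v' * (X 1 * q') + s' * (X 0 ^ 2 * X 2 ^ (a + b)))) =
      (u' - u) * (X 0 * q') + (v' - v) * (X 1 * q') +
        (s' - s) * (X 0 ^ 2 * X 2 ^ (a + b)) by ring] at this
    rw [hq'] at this
    exact this
  obtain ⟨e1, e2, e3⟩ := core a b (sub_mem hu' hu) (sub_mem hv' hv) (sub_mem hs' hs) hcomb
  rw [sub_eq_zero] at e1 e2 e3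
  exact Prod.ext e1 (Prod.ext e2 e3)
end
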